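/- arXiv:2006.06502 — 5 statements merged into one kernel-verified Lean document; each statement's English description precedes it below -/
import Mathlib

section
/- Let K be a field, n ≥ 3, and let σ ∈ GL_n(K) be noncentral. If the characteristic polynomial of σ has a root in K, then there exist ρ, τ ∈ SL_n(K) such that t_{12}(1) = (ρ⁻¹σρ)·(τ⁻¹σ⁻¹τ). -/
open Matrix

section Helpers
open Polynomial
variable {K : Type*} [Field K]

theorem vmv_mul_vmv {n : ℕ} (u x v y : Fin n → K) :
    vecMulVec u x * vecMulVec v y = (x ⬝ᵥ v) • vecMulVec u y := by
  ext i j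
  simp [vecMulVec_apply, mul_apply, dotProduct, Finset.sum_mul, Finset.mul_sum]
  congr 1; ext k; ring

theorem mul_vmv {n : ℕ} (M : Matrix (Fin n) (Fin n) K) (u x : Fin n → K) :
    M * vecMulVec u x = vecMulVec (M *ᵥ u) x := by
  ext i j; simp [vecMulVec_apply, mul_apply, mulVec, dotProduct, Finset.sum_mul, mul_assoc]

theorem vmv_mul {n : ℕ} (M : Matrix (Fin n) (Fin n) K) (u x : Fin n → K) :
    vecMulVec u x * M = vecMulVec u (x ᵥ* M) := by
  ext i j; simp [vecMulVec_apply, mul_apply, vecMul, dotProduct, Finset.mul_sum]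
  congr 1; ext k; ring

theorem vmv_smul_right {n : ℕ} (u x : Fin n → K) (c : K) :
    vecMulVec u (c • x) = c • vecMulVec u x := by
  ext i j; simp [vecMulVec_apply]; ring

theorem vmv_smul_left {n : ℕ} (u x : Fin n → K) (c : K) :
    vecMulVec (c • u) x = c • vecMulVec u x := by
  ext i j; simp [vecMulVec_apply]; ring

theorem vmv_sub_right {n : ℕ} (u x y : Fin n → K) :
    vecMulVec u (x - y) = vecMulVec u x - vecMulVec u y := by
  ext i j; simp [vecMulVec_apply]; ring

theorem vmv_mulVec {n : ℕ} (u x v : Fin n → K) :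
    vecMulVec u x *ᵥ v = (x ⬝ᵥ v) • u := by
  ext i
  simp only [vecMulVec_apply, mulVec, dotProduct, Pi.smul_apply, smul_eq_mul, Finset.sum_mul]
  exact Finset.sum_congr rfl fun k _ => by ring

theorem vecMul_smul_mat {n : ℕ} (x : Fin n → K) (a : K) (M : Matrix (Fin n) (Fin n) K) :
    x ᵥ* (a • M) = a • (x ᵥ* M) := by
  ext j
  simp only [vecMul, dotProduct, Matrix.smul_apply, Pi.smul_apply, smul_eq_mul, Finset.mul_sum]
  exact Finset.sum_congr rfl fun k _ => by ring

theorem det_one_add_vmv {n : ℕ} (u x : Fin n → K) :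
    (1 + vecMulVec u x).det = 1 + x ⬝ᵥ u := by
  rw [vecMulVec_eq Unit, det_one_add_replicateCol_mul_replicateRow]

theorem one_add_vmv_inv {n : ℕ} (u x : Fin n → K) (h : x ⬝ᵥ u = 0) :
    (1 + vecMulVec u x) * (1 - vecMulVec u x) = 1 := by
  rw [mul_sub, mul_one, add_mul, one_mul, vmv_mul_vmv, h, zero_smul, add_zero]
  abel

theorem one_sub_vmv_inv {n : ℕ} (u x : Fin n → K) (h : x ⬝ᵥ u = 0) :
    (1 - vecMulVec u x) * (1 + vecMulVec u x) = 1 := by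
  rw [sub_mul, one_mul, mul_add, mul_one, vmv_mul_vmv, h, zero_smul, add_zero]
  abel


theorem perm_mulVec {n : ℕ} (e : Equiv.Perm (Fin n)) (v : Fin n → K) :
    (e.permMatrix K) *ᵥ v = fun i => v (e i) := by
  ext i
  simp [mulVec, dotProduct, PEquiv.toMatrix_apply, Equiv.toPEquiv_apply]

theorem perm_vecMul {n : ℕ} (e : Equiv.Perm (Fin n)) (v : Fin n → K) :
    v ᵥ* (e.permMatrix K) = fun j => v (e.symm j) := by
  ext j
  simp only [vecMul, dotProduct, PEquiv.toMatrix_apply, Equiv.toPEquiv_apply, Option.mem_def,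
    Option.some.injEq, mul_ite, mul_one, mul_zero]
  have h : ∀ x : Fin n, (e x = j) = (x = e.symm j) := fun x => propext
    (by rw [Equiv.apply_eq_iff_eq_symm_apply])
  simp [h, Finset.sum_ite_eq']

theorem perm_det_ne_zero {n : ℕ} (e : Equiv.Perm (Fin n)) : (e.permMatrix K).det ≠ 0 := by
  rw [Matrix.det_permutation]
  rcases Int.units_eq_one_or (Equiv.Perm.sign e) with h | h <;> simp [h]

theorem key {n : ℕ} (hn : 3 ≤ n) (u ψ : Fin n → K) (hu : u ≠ 0) (hψ : ψ ≠ 0)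
    (hperp : ψ ⬝ᵥ u = 0) :
    ∃ B : Matrix (Fin n) (Fin n) K, B.det = 1 ∧
      B *ᵥ Pi.single (⟨0, Nat.lt_of_lt_of_le (by decide) hn⟩ : Fin n) 1 = u ∧
      ψ ᵥ* B = Pi.single (⟨1, Nat.lt_of_lt_of_le (by decide) hn⟩ : Fin n) 1 := by
  classical
  set z0 : Fin n := ⟨0, Nat.lt_of_lt_of_le (by decide) hn⟩ with hz0
  set z1 : Fin n := ⟨1, Nat.lt_of_lt_of_le (by decide) hn⟩ with hz1
  set z2 : Fin n := ⟨2, by omega⟩ with hz2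
  have h01 : z0 ≠ z1 := by simp [hz0, hz1, Fin.ext_iff]
  have h02 : z0 ≠ z2 := by simp [hz0, hz2, Fin.ext_iff]
  have h12 : z1 ≠ z2 := by simp [hz1, hz2, Fin.ext_iff]
  obtain ⟨i₀, hi₀⟩ : ∃ i, u i ≠ 0 := by
    by_contra h; push_neg at h; exact hu (funext h)
  set e1 : Equiv.Perm (Fin n) := Equiv.swap z0 i₀ with he1
  set P : Matrix (Fin n) (Fin n) K := e1.permMatrix K with hP
  set A : Matrix (Fin n) (Fin n) K :=
    fun i j => if j = z0 then u (e1 i) else if i = j then 1 else 0 with hA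
  have hAdet : A.det = u i₀ := by
    rw [Matrix.det_of_lowerTriangular A ?ht]
    case ht =>
      intro i j hij
      have hij' : i < j := hij
      have hj0 : j ≠ z0 := by
        intro h; subst h
        simp [hz0, Fin.lt_def] at hij'
      simp [hA, hj0, hij'.ne]
    · rw [Finset.prod_eq_single z0 ?h1 ?h2]
      · simp [hA, he1, Equiv.swap_apply_left]
      case h1 => intro i _ hi; simp [hA, hi]
      case h2 => simp
  set M1 : Matrix (Fin n) (Fin n) K := P * A with hM1
  have hM1col : ∀ i, M1 i z0 = u i := by
    intro i
    have : M1 *ᵥ Pi.single z0 1 = u := by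
      rw [hM1, ← mulVec_mulVec, mulVec_single, hP]
      have : (fun i => A i z0 * 1) = fun i => u (e1 i) := by
        funext i; simp [hA]
      rw [show (MulOpposite.op (1:K) • A.col z0) = fun i => A i z0 * 1 by funext i; simp,
        this, perm_mulVec]
      funext i
      simp [he1, Equiv.swap_apply_self]
    have h2 := congrFun this i
    rw [mulVec_single] at h2
    simpa using h2
  have hM1det : M1.det ≠ 0 := by
    rw [hM1, det_mul, hAdet]
    exact mul_ne_zero (perm_det_ne_zero e1) hi₀
  set φ₁ : Fin n → K := ψ ᵥ* M1 with hφ₁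
  have hφ₁0 : φ₁ z0 = 0 := by
    rw [hφ₁]
    show (∑ i, ψ i * M1 i z0) = 0
    rw [← hperp]
    exact Finset.sum_congr rfl fun i _ => by rw [hM1col]
  have hφ₁ne : φ₁ ≠ 0 := by
    intro h0
    apply hψ
    have hinv := mul_nonsing_inv M1 (Ne.isUnit hM1det)
    calc ψ = ψ ᵥ* (M1 * M1⁻¹) := by rw [hinv, vecMul_one]
    _ = (ψ ᵥ* M1) ᵥ* M1⁻¹ := by rw [vecMul_vecMul]
    _ = 0 := by rw [← hφ₁, h0, zero_vecMul]
  obtain ⟨k, hk⟩ : ∃ k, φ₁ k ≠ 0 := by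
    by_contra h; push_neg at h; exact hφ₁ne (funext h)
  have hk0 : k ≠ z0 := fun h => hk (h ▸ hφ₁0)
  set e2 : Equiv.Perm (Fin n) := Equiv.swap z1 k with he2
  set Q : Matrix (Fin n) (Fin n) K := e2.permMatrix K with hQ
  set M2 : Matrix (Fin n) (Fin n) K := M1 * Q with hM2
  set φ₂ : Fin n → K := ψ ᵥ* M2 with hφ₂
  have hφ₂e : φ₂ = fun j => φ₁ (e2 j) := by
    rw [hφ₂, hM2, ← vecMul_vecMul, ← hφ₁, hQ, perm_vecMul]
    simp [he2]
  set b : K := φ₂ z1 with hb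
  have hbne : b ≠ 0 := by
    rw [hb, hφ₂e]
    simpa [he2, Equiv.swap_apply_left] using hk
  have hφ₂0 : φ₂ z0 = 0 := by
    rw [hφ₂e]
    have : e2 z0 = z0 := Equiv.swap_apply_of_ne_of_ne h01 (Ne.symm hk0)
    simp [this, hφ₁0]
  have hM2col : ∀ i, M2 i z0 = u i := by
    intro i
    have he2z0 : e2 z0 = z0 := Equiv.swap_apply_of_ne_of_ne h01 (Ne.symm hk0)
    have : M2 i z0 = ∑ j, M1 i j * Q j z0 := by rw [hM2, Matrix.mul_apply]
    rw [this]
    have hQcol : ∀ j, Q j z0 = if j = z0 then 1 else 0 := by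
      intro j
      rw [hQ]
      show e2.toPEquiv.toMatrix j z0 = _
      rw [PEquiv.toMatrix_toPEquiv_eq, submatrix_apply, id_eq, one_apply]
      congr 1
      simp only [eq_iff_iff]
      constructor
      · intro h; exact e2.injective (h.trans he2z0.symm)
      · intro h; rw [h, he2z0]
    simp only [hQcol, mul_ite, mul_one, mul_zero]
    rw [Finset.sum_ite_eq' Finset.univ z0 (fun j => M1 i j)]
    simp [hM1col]
  have hM2det : M2.det ≠ 0 := by
    rw [hM2, det_mul]
    exact mul_ne_zero hM1det (perm_det_ne_zero e2)
  set d : K := M2.det with hd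
  set s : K := b * d⁻¹ with hs
  set sc : Fin n → K := fun j => if j = z2 then s else 1 with hsc
  set C : Matrix (Fin n) (Fin n) K := fun i j =>
    if j = z0 then (if i = z0 then 1 else 0)
    else if j = z1 then (if i = z1 then b⁻¹ else 0)
    else (if i = j then sc j else 0) + (if i = z1 then -(sc j * φ₂ j) * b⁻¹ else 0) with hC
  have hCdet : C.det = b⁻¹ * s := by
    rw [Matrix.det_of_upperTriangular ?ht]
    case ht =>
      intro i j hij
      have hij' : j < i := hij
      have hne : i ≠ j := (ne_of_lt hij').symm
      by_cases hj0 : j = z0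
      · subst hj0
        have hi0 : i ≠ z0 := by
          intro h; rw [h] at hij'; exact absurd hij' (lt_irrefl _)
        simp [hC, hi0]
      by_cases hj1 : j = z1
      · subst hj1
        have hi1 : i ≠ z1 := (ne_of_lt hij').symm
        simp [hC, hj0, hi1]
      · have hj0' : (j : ℕ) ≠ 0 := fun h => hj0 (by rw [hz0]; exact Fin.ext h)
        have hj1' : (j : ℕ) ≠ 1 := fun h => hj1 (by rw [hz1]; exact Fin.ext h)
        have hij2 : (j : ℕ) < (i : ℕ) := hij'
        have hi1 : i ≠ z1 := by
          intro h
          have : (i : ℕ) = 1 := by rw [h, hz1]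
          omega
        simp [hC, hj0, hj1, hne, hi1]
    · have hdiag : ∀ i, C i i = (if i = z1 then b⁻¹ else 1) * (if i = z2 then s else 1) := by
        intro i
        by_cases h0 : i = z0
        · subst h0; simp [hC, h01, h02]
        by_cases h1 : i = z1
        · subst h1; simp [hC, Ne.symm h01, h12]
        · simp [hC, h0, h1, hsc]
      calc ∏ i, C i i
          = ∏ i, ((if i = z1 then b⁻¹ else 1) * (if i = z2 then s else 1)) :=
            Finset.prod_congr rfl fun i _ => hdiag i
        _ = (∏ i, (if i = z1 then b⁻¹ else 1)) * ∏ i, (if i = z2 then s else 1) :=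
            Finset.prod_mul_distrib
        _ = b⁻¹ * s := by
            rw [Finset.prod_ite_eq' Finset.univ z1 (fun _ => b⁻¹),
              Finset.prod_ite_eq' Finset.univ z2 (fun _ => s)]
            simp
  have hCcol : C *ᵥ Pi.single z0 1 = Pi.single z0 1 := by
    funext i
    rw [mulVec_single, Pi.smul_apply, Matrix.col_apply]
    simp [hC, Pi.single_apply]
  have hCvec : φ₂ ᵥ* C = Pi.single z1 1 := by
    funext j
    show (∑ i, φ₂ i * C i j) = _
    by_cases hj0 : j = z0
    · subst hj0
      have hterm : ∀ i, φ₂ i * C i z0 = if i = z0 then φ₂ i else 0 := by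
        intro i; by_cases h : i = z0 <;> simp [hC, h]
      rw [Finset.sum_congr rfl fun i _ => hterm i,
        Finset.sum_ite_eq' Finset.univ z0 φ₂]
      simp [hφ₂0, Pi.single_apply, Ne.symm h01]
    by_cases hj1 : j = z1
    · subst hj1
      have hterm : ∀ i, φ₂ i * C i z1 = if i = z1 then φ₂ z1 * b⁻¹ else 0 := by
        intro i
        by_cases h : i = z1 <;> simp [hC, h, Ne.symm h01]
      rw [Finset.sum_congr rfl fun i _ => hterm i,
        Finset.sum_ite_eq' Finset.univ z1 (fun _ => φ₂ z1 * b⁻¹)]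
      simp [← hb, hbne, Pi.single_apply]
    · have hterm : ∀ i, φ₂ i * C i j =
          (if i = j then φ₂ i * sc j else 0)
            + (if i = z1 then φ₂ i * (-(sc j * φ₂ j) * b⁻¹) else 0) := by
        intro i
        by_cases h : i = j
        · subst h; simp [hC, hj0, hj1, mul_add]
        · by_cases h2 : i = z1 <;> simp [hC, hj0, hj1, h, h2, mul_add]
      rw [Finset.sum_congr rfl fun i _ => hterm i, Finset.sum_add_distrib,
        Finset.sum_ite_eq' Finset.univ j (fun i => φ₂ i * sc j),
        Finset.sum_ite_eq' Finset.univ z1 (fun i => φ₂ i * (-(sc j * φ₂ j) * b⁻¹))]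
      have hsingle : (Pi.single z1 1 : Fin n → K) j = 0 := by simp [Pi.single_apply, hj1]
      rw [hsingle]
      simp only [Finset.mem_univ, if_true, ← hb]
      field_simp
      ring
  refine ⟨M2 * C, ?_, ?_, ?_⟩
  · rw [det_mul, hCdet, ← hd, hs]
    field_simp
  · rw [← mulVec_mulVec, hCcol]
    funext i
    rw [mulVec_single]
    simpa using hM2col i
  · rw [← vecMul_vecMul, ← hφ₂, hCvec]


theorem exists_perp {n : ℕ} (hn : 3 ≤ n) (u w : Fin n → K) :
    ∃ ξ : Fin n → K, ξ ≠ 0 ∧ ξ ⬝ᵥ u = 0 ∧ ξ ⬝ᵥ w = 0 := by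
  let L : (Fin n → K) →ₗ[K] K × K :=
    { toFun := fun x => (x ⬝ᵥ u, x ⬝ᵥ w)
      map_add' := fun x y => by simp [add_dotProduct]
      map_smul' := fun c x => by simp [smul_dotProduct] }
  have : ¬ Function.Injective L := by
    intro hinj
    have h1 := LinearMap.finrank_le_finrank_of_injective hinj
    rw [Module.finrank_pi, Module.finrank_prod, Module.finrank_self] at h1
    simp [Fintype.card_fin] at h1
    omega
  rw [← LinearMap.ker_eq_bot] at this
  obtain ⟨ξ, hmem, hne⟩ := Submodule.exists_mem_ne_zero_of_ne_bot this
  have := LinearMap.mem_ker.mp hmem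
  have h2 : ξ ⬝ᵥ u = 0 ∧ ξ ⬝ᵥ w = 0 := by simpa [L, Prod.ext_iff] using this
  exact ⟨ξ, hne, h2.1, h2.2⟩


theorem det_smul_one_sub_eq_zero {n : ℕ} (σ : Matrix (Fin n) (Fin n) K) (a : K) (h : σ.charpoly.IsRoot a) :
    (a • (1 : Matrix (Fin n) (Fin n) K) - σ).det = 0 := by
  have h1 : (charmatrix σ).map (evalRingHom a) = a • 1 - σ := by
    ext i j
    by_cases hij : i = j <;>
      simp [hij, charmatrix_apply_eq, charmatrix_apply_ne, one_apply, Matrix.sub_apply]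
  have h2 := RingHom.map_det (evalRingHom a) (charmatrix σ)
  rw [RingHom.mapMatrix_apply] at h2
  rw [← h1, ← h2]
  simpa [Matrix.charpoly] using h

theorem exists_eigen {n : ℕ} (σ : Matrix (Fin n) (Fin n) K) (a : K) (h : σ.charpoly.IsRoot a) :
    ∃ u : Fin n → K, u ≠ 0 ∧ σ *ᵥ u = a • u := by
  obtain ⟨u, hu0, hu⟩ := (Matrix.exists_mulVec_eq_zero_iff).2 (det_smul_one_sub_eq_zero σ a h)
  refine ⟨u, hu0, ?_⟩
  have := hu
  rw [sub_mulVec, smul_mulVec, one_mulVec, sub_eq_zero] at this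
  exact this.symm


theorem assemble {n : ℕ} (hn : 3 ≤ n) (σ : Matrix (Fin n) (Fin n) K) (hσ : IsUnit σ.det)
    (h h' : Matrix (Fin n) (Fin n) K) (hhh : h * h' = 1)
    (hdeth : h.det = 1)
    (u ψv : Fin n → K) (hu : u ≠ 0) (hψ : ψv ≠ 0) (hperp : ψv ⬝ᵥ u = 0)
    (hcomm : σ * h * σ⁻¹ * h' = 1 + vecMulVec u ψv) :
    ∃ ρ τ : Matrix (Fin n) (Fin n) K, ρ.det = 1 ∧ τ.det = 1 ∧
      Matrix.transvection (⟨0, Nat.lt_of_lt_of_le (by decide) hn⟩ : Fin n) (⟨1, Nat.lt_of_lt_of_le (by decide) hn⟩ : Fin n) (1 : K)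
        = (ρ⁻¹ * σ * ρ) * (τ⁻¹ * σ⁻¹ * τ) := by
  obtain ⟨B, hBdet, hBcol, hBvec⟩ := key hn u ψv hu hψ hperp
  have hBunit : IsUnit B.det := by rw [hBdet]; exact isUnit_one
  have hBB : B * B⁻¹ = 1 := mul_nonsing_inv B hBunit
  have hB'B : B⁻¹ * B = 1 := nonsing_inv_mul B hBunit
  have hdeth' : h'.det = 1 := by
    have := congrArg Matrix.det hhh
    rw [det_mul, hdeth, one_mul, det_one] at this
    exact this
  refine ⟨B, h' * B, ?_, ?_, ?_⟩
  · exact hBdet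
  · rw [det_mul, hBdet, mul_one, hdeth']
  · have hτinv : (h' * B)⁻¹ = B⁻¹ * h := by
      apply Matrix.inv_eq_left_inv
      calc B⁻¹ * h * (h' * B) = B⁻¹ * ((h * h') * B) := by
            simp only [Matrix.mul_assoc]
        _ = 1 := by rw [hhh, Matrix.one_mul, hB'B]
    rw [hτinv]
    have hBinv : B⁻¹ = B⁻¹ := rfl
    have expand : (B⁻¹ * σ * B) * (B⁻¹ * h * σ⁻¹ * (h' * B))
        = B⁻¹ * ((σ * h * σ⁻¹ * h') * B) := by
      have key2 : ∀ Y : Matrix (Fin n) (Fin n) K, B * (B⁻¹ * Y) = Y := fun Y => by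
        rw [← Matrix.mul_assoc, hBB, Matrix.one_mul]
      simp only [Matrix.mul_assoc]
      rw [key2]
    rw [expand, hcomm]
    have hBu : B⁻¹ *ᵥ u = Pi.single (⟨0, Nat.lt_of_lt_of_le (by decide) hn⟩ : Fin n) 1 := by
      rw [← hBcol, mulVec_mulVec, hB'B, one_mulVec]
    have hval : B⁻¹ * ((1 + vecMulVec u ψv) * B) = 1 + vecMulVec (B⁻¹ *ᵥ u) (ψv ᵥ* B) := by
      rw [Matrix.add_mul, Matrix.one_mul, Matrix.mul_add, hB'B, vmv_mul, mul_vmv]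
    rw [hval, hBu, hBvec, Matrix.transvection, single_eq_single_vecMulVec_single]


end Helpers

theorem stmt3 {n : ℕ} (hn : 3 ≤ n) {K : Type*} [Field K]
    (σ : Matrix (Fin n) (Fin n) K) (hσ : IsUnit σ.det)
    (hnoncentral : ∀ a : K, σ ≠ a • (1 : Matrix (Fin n) (Fin n) K))
    (hroot : ∃ a : K, σ.charpoly.IsRoot a) :
    ∃ ρ τ : Matrix (Fin n) (Fin n) K, ρ.det = 1 ∧ τ.det = 1 ∧
      Matrix.transvection (⟨0, by omega⟩ : Fin n) (⟨1, by omega⟩ : Fin n) (1 : K)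
        = (ρ⁻¹ * σ * ρ) * (τ⁻¹ * σ⁻¹ * τ) := by
  obtain ⟨a, ha⟩ := hroot
  obtain ⟨u, hu, heig⟩ := exists_eigen σ a ha
  have ha0 : a ≠ 0 := by
    intro h
    subst h
    have h2 := det_smul_one_sub_eq_zero σ 0 ha
    rw [zero_smul, zero_sub, det_neg] at h2
    have h3 : ((-1 : K) ^ Fintype.card (Fin n)) ≠ 0 :=
      pow_ne_zero _ (neg_ne_zero.mpr one_ne_zero)
    exact hσ.ne_zero ((mul_eq_zero.mp h2).resolve_left h3)
  have hinvu : σ⁻¹ *ᵥ u = a⁻¹ • u := by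
    have h1 : σ⁻¹ *ᵥ (σ *ᵥ u) = u := by
      rw [mulVec_mulVec, nonsing_inv_mul σ hσ, one_mulVec]
    rw [heig, mulVec_smul] at h1
    calc σ⁻¹ *ᵥ u = a⁻¹ • (a • (σ⁻¹ *ᵥ u)) := by
          rw [smul_smul, inv_mul_cancel₀ ha0, one_smul]
      _ = a⁻¹ • u := by rw [h1]
  by_cases hcase : ∃ φ : Fin n → K, φ ⬝ᵥ u = 0 ∧ a • (φ ᵥ* σ⁻¹) - φ ≠ 0
  · obtain ⟨φ, hφu, hψne⟩ := hcase
    have hφ1u : (φ ᵥ* σ⁻¹) ⬝ᵥ u = 0 := by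
      rw [← dotProduct_mulVec, hinvu]
      simp [hφu]
    set ψv : Fin n → K := a • (φ ᵥ* σ⁻¹) - φ with hψv
    have hψu : ψv ⬝ᵥ u = 0 := by
      rw [hψv, sub_dotProduct, smul_dotProduct, hφ1u, hφu]
      simp
    have hcomm : σ * (1 + vecMulVec u φ) * σ⁻¹ * (1 - vecMulVec u φ)
        = 1 + vecMulVec u ψv := by
      have e1 : σ * (1 + vecMulVec u φ) * σ⁻¹ = 1 + a • vecMulVec u (φ ᵥ* σ⁻¹) := by
        rw [Matrix.mul_add, Matrix.mul_one, Matrix.add_mul, mul_nonsing_inv σ hσ,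
          mul_vmv, heig, vmv_mul, vmv_smul_left]
      have e2 : (a • vecMulVec u (φ ᵥ* σ⁻¹)) * vecMulVec u φ = 0 := by
        rw [smul_mul_assoc, vmv_mul_vmv, hφ1u, zero_smul, smul_zero]
      rw [e1, Matrix.add_mul, Matrix.one_mul, Matrix.mul_sub, Matrix.mul_one, e2, sub_zero,
        hψv, vmv_sub_right, vmv_smul_right]
      abel
    refine assemble hn σ hσ _ _ (one_add_vmv_inv u φ hφu) ?_ u ψv hu hψne hψu hcomm
    rw [det_one_add_vmv, hφu, add_zero]
  · push_neg at hcase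
    obtain ⟨i₀, hi₀⟩ : ∃ i, u i ≠ 0 := by
      by_contra hcc; push_neg at hcc; exact hu (funext hcc)
    set M : Matrix (Fin n) (Fin n) K := a • σ⁻¹ - 1 with hMdef
    have hMvec : ∀ φ : Fin n → K, φ ⬝ᵥ u = 0 → φ ᵥ* M = 0 := by
      intro φ hφ
      rw [hMdef, vecMul_sub, vecMul_smul_mat, vecMul_one]
      exact hcase φ hφ
    set lam : Fin n → K := fun j => M i₀ j / u i₀ with hlam
    have hMij : ∀ i j, M i j = u i * lam j := by
      intro i j
      have hφu : (Pi.single i (u i₀) - Pi.single i₀ (u i) : Fin n → K) ⬝ᵥ u = 0 := by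
        rw [sub_dotProduct, single_dotProduct, single_dotProduct]; ring
      have h2 := congrFun (hMvec _ hφu) j
      rw [sub_vecMul, single_vecMul, single_vecMul] at h2
      simp only [Pi.sub_apply, Pi.zero_apply, Pi.smul_apply, Matrix.row_apply, smul_eq_mul] at h2
      rw [hlam]
      field_simp
      linear_combination h2
    have hM : M = vecMulVec u lam := by
      ext i j; rw [hMij, vecMulVec_apply]
    have hMu0 : M *ᵥ u = 0 := by
      rw [hMdef, sub_mulVec, smul_mulVec, one_mulVec, hinvu, smul_smul,
        mul_inv_cancel₀ ha0, one_smul, sub_self]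
    have hlamu : lam ⬝ᵥ u = 0 := by
      rw [hM, vmv_mulVec] at hMu0
      by_contra hne
      have h3 := congrFun hMu0 i₀
      simp only [Pi.smul_apply, smul_eq_mul, Pi.zero_apply] at h3
      exact hi₀ ((mul_eq_zero.mp h3).resolve_left hne)
    have hlamne : lam ≠ 0 := by
      intro h0
      apply hnoncentral a
      have hM0 : M = 0 := by
        rw [hM, h0]; ext i j; simp [vecMulVec_apply]
      have h4 : a • σ⁻¹ = 1 := by rwa [hMdef, sub_eq_zero] at hM0
      calc σ = σ * (a • σ⁻¹) := by rw [h4, Matrix.mul_one]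
        _ = a • (σ * σ⁻¹) := by rw [Matrix.mul_smul]
        _ = a • 1 := by rw [mul_nonsing_inv σ hσ]
    have hTdecomp : a • σ⁻¹ = 1 + vecMulVec u lam := by
      rw [← hM, hMdef]; abel
    have hσinv_eq : σ⁻¹ = a⁻¹ • (1 + vecMulVec u lam) := by
      rw [← hTdecomp, smul_smul, inv_mul_cancel₀ ha0, one_smul]
    have hσ_eq : σ = a • (1 - vecMulVec u lam) := by
      have h1 : σ * (1 + vecMulVec u lam) = a • 1 := by
        rw [← hTdecomp, Matrix.mul_smul, mul_nonsing_inv σ hσ]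
      calc σ = σ * ((1 + vecMulVec u lam) * (1 - vecMulVec u lam)) := by
            rw [one_add_vmv_inv u lam hlamu, Matrix.mul_one]
        _ = (σ * (1 + vecMulVec u lam)) * (1 - vecMulVec u lam) := by
            rw [Matrix.mul_assoc]
        _ = (a • (1 : Matrix (Fin n) (Fin n) K)) * (1 - vecMulVec u lam) := by rw [h1]
        _ = a • (1 - vecMulVec u lam) := by rw [smul_mul_assoc, Matrix.one_mul]
    obtain ⟨k, hk⟩ : ∃ k, lam k ≠ 0 := by
      by_contra hcc; push_neg at hcc; exact hlamne (funext hcc)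
    set w : Fin n → K := Pi.single k 1 with hw
    have hlamw : lam ⬝ᵥ w ≠ 0 := by
      rw [hw, dotProduct_single, mul_one]
      exact hk
    obtain ⟨ξ, hξne, hξu, hξw⟩ := exists_perp hn u w
    set U : Matrix (Fin n) (Fin n) K := vecMulVec u lam with hU
    set W : Matrix (Fin n) (Fin n) K := vecMulVec w ξ with hW
    have eUU : U * U = 0 := by rw [hU, vmv_mul_vmv, hlamu, zero_smul]
    have eWW : W * W = 0 := by rw [hW, vmv_mul_vmv, hξw, zero_smul]
    have eWU : W * U = 0 := by rw [hW, hU, vmv_mul_vmv, hξu, zero_smul]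
    have eUW : U * W = (lam ⬝ᵥ w) • vecMulVec u ξ := by rw [hU, hW, vmv_mul_vmv]
    set ψv : Fin n → K := (-(lam ⬝ᵥ w)) • ξ with hψv
    have hψne : ψv ≠ 0 := by
      rw [hψv]; exact smul_ne_zero (neg_ne_zero.mpr hlamw) hξne
    have hψu : ψv ⬝ᵥ u = 0 := by rw [hψv, smul_dotProduct, hξu, smul_zero]
    have hprod : (1 - U) * (1 + W) * (1 + U) * (1 - W) = 1 + vecMulVec u ψv := by
      have h1 : (1 + W) * (1 + U) = 1 + U + W := by
        simp only [Matrix.add_mul, Matrix.mul_add, Matrix.one_mul, Matrix.mul_one]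
        rw [eWU]
        abel
      have h2 : (1 - U) * (1 + U + W) = 1 + W - U * W := by
        simp only [Matrix.sub_mul, Matrix.mul_add, Matrix.one_mul, Matrix.mul_one]
        rw [eUU]
        abel
      have h3 : (1 + W - U * W) * (1 - W) = 1 - U * W := by
        simp only [Matrix.sub_mul, Matrix.add_mul, Matrix.mul_sub, Matrix.one_mul,
          Matrix.mul_one, Matrix.mul_assoc]
        simp only [eWW, Matrix.mul_zero, sub_zero]
        abel
      rw [Matrix.mul_assoc (1 - U) (1 + W) (1 + U), h1, h2, h3, hψv, vmv_smul_right, eUW,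
        neg_smul, ← sub_eq_add_neg]
    have hcomm : σ * (1 + W) * σ⁻¹ * (1 - W) = 1 + vecMulVec u ψv := by
      rw [hσinv_eq, hσ_eq]
      calc (a • (1 - U)) * (1 + W) * (a⁻¹ • (1 + U)) * (1 - W)
          = (a * a⁻¹) • ((1 - U) * (1 + W) * (1 + U) * (1 - W)) := by
            rw [smul_mul_assoc, smul_mul_assoc, Matrix.mul_smul, smul_smul, smul_mul_assoc]
        _ = 1 + vecMulVec u ψv := by
            rw [mul_inv_cancel₀ ha0, one_smul, hprod]
    refine assemble hn σ hσ _ _ (one_add_vmv_inv w ξ hξw) ?_ u ψv hu hψne hψu hcomm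
    rw [det_one_add_vmv, hξw, add_zero]
end

section
/- Over the field 𝔽₂ with two elements, consider the matrices σ = [[0,1,1,0],[0,1,0,1],[1,0,1,0],[0,1,0,0]] and τ = [[0,0,1,1],[0,1,0,1],[1,0,1,0],[0,1,0,0]] in GL_4(𝔽₂). Then: (a) σ = t_{12}(1)·τ; (b) σ and τ are conjugate in GL_4(𝔽₂) (both have characteristic polynomial X⁴ + X² + 1 and are similar to the companion matrix of X⁴ + X² + 1); (c) the characteristic polynomial X⁴ + X² + 1 of σ has no root in 𝔽₂. Consequently, t_{12}(1) is a product of a conjugate of σ and a conjugate of σ⁻¹ even though χ_σ has no root in 𝔽₂ (so the converse of the root criterion fails). -/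
open Matrix Polynomial

private lemma two_eq_zero_poly : (2:(ZMod 2)[X]) = 0 := by
  have h : (2:(ZMod 2)[X]) = C 1 + C 1 := by rw [C_1]; ring
  rw [h, ← C_add, show (1+1:ZMod 2) = 0 by decide, map_zero]

private lemma cp_sigma :
    (!![0,1,1,0; 0,1,0,1; 1,0,1,0; 0,1,0,0] : Matrix (Fin 4) (Fin 4) (ZMod 2)).charpoly
      = X ^ 4 + X ^ 2 + 1 := by
  rw [Matrix.charpoly]
  simp [Matrix.det_succ_row_zero, Fin.sum_univ_succ, charmatrix_apply, Matrix.one_apply,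
    Matrix.diagonal_apply, show (Fin.succAbove (2 : Fin 4) (2 : Fin 3)) = 3 from rfl,
    show (Fin.succAbove (3 : Fin 4) (2 : Fin 3)) = 2 from rfl]
  ring_nf
  linear_combination (X - X^2 - X^3 : (ZMod 2)[X]) * two_eq_zero_poly

private lemma cp_tau :
    (!![0,0,1,1; 0,1,0,1; 1,0,1,0; 0,1,0,0] : Matrix (Fin 4) (Fin 4) (ZMod 2)).charpoly
      = X ^ 4 + X ^ 2 + 1 := by
  rw [Matrix.charpoly]
  simp [Matrix.det_succ_row_zero, Fin.sum_univ_succ, charmatrix_apply, Matrix.one_apply,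
    Matrix.diagonal_apply, show (Fin.succAbove (2 : Fin 4) (2 : Fin 3)) = 3 from rfl,
    show (Fin.succAbove (3 : Fin 4) (2 : Fin 3)) = 2 from rfl]
  ring_nf
  linear_combination (X - X^2 - X^3 : (ZMod 2)[X]) * two_eq_zero_poly

theorem stmt9 :
    let σ : Matrix (Fin 4) (Fin 4) (ZMod 2) := !![0,1,1,0; 0,1,0,1; 1,0,1,0; 0,1,0,0]
    let τ : Matrix (Fin 4) (Fin 4) (ZMod 2) := !![0,0,1,1; 0,1,0,1; 1,0,1,0; 0,1,0,0]
    -- (a) σ = t₁₂(1) · τ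
    σ = Matrix.transvection (0 : Fin 4) (1 : Fin 4) (1 : ZMod 2) * τ ∧
    -- (b) σ and τ are conjugate in GL₄(𝔽₂), with common characteristic polynomial X⁴ + X² + 1
    σ.charpoly = X ^ 4 + X ^ 2 + 1 ∧
    τ.charpoly = X ^ 4 + X ^ 2 + 1 ∧
    (∃ ρ : Matrix (Fin 4) (Fin 4) (ZMod 2), IsUnit ρ.det ∧ ρ⁻¹ * σ * ρ = τ) ∧
    -- (c) the characteristic polynomial of σ has no root in 𝔽₂
    (∀ a : ZMod 2, ¬ σ.charpoly.IsRoot a) ∧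
    -- consequence: t₁₂(1) is a product of a conjugate of σ and a conjugate of σ⁻¹
    (∃ ρ₁ ρ₂ : Matrix (Fin 4) (Fin 4) (ZMod 2), IsUnit ρ₁.det ∧ IsUnit ρ₂.det ∧
      Matrix.transvection (0 : Fin 4) (1 : Fin 4) (1 : ZMod 2)
        = (ρ₁⁻¹ * σ * ρ₁) * (ρ₂⁻¹ * σ⁻¹ * ρ₂)) := by
  intro σ τ
  have hσ : σ = !![0,1,1,0; 0,1,0,1; 1,0,1,0; 0,1,0,0] := rfl
  have hτ : τ = !![0,0,1,1; 0,1,0,1; 1,0,1,0; 0,1,0,0] := rfl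
  set ρ : Matrix (Fin 4) (Fin 4) (ZMod 2) := !![1,0,1,1; 0,1,0,1; 1,0,0,0; 0,1,0,0] with hρ
  set ρi : Matrix (Fin 4) (Fin 4) (ZMod 2) := !![0,0,1,0; 0,0,0,1; 1,1,1,1; 0,1,0,1] with hρi
  set σi : Matrix (Fin 4) (Fin 4) (ZMod 2) := !![1,0,1,1; 0,0,0,1; 1,0,0,1; 0,1,0,1] with hσi
  have hρinv : ρ⁻¹ = ρi := Matrix.inv_eq_right_inv (by decide)
  have hσinv : σ⁻¹ = σi := Matrix.inv_eq_right_inv (by decide)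
  have hρdet : IsUnit ρ.det := by rw [show ρ.det = 1 by decide]; exact isUnit_one
  have hconj : ρ⁻¹ * σ * ρ = τ := by rw [hρinv]; decide
  refine ⟨by decide, cp_sigma, cp_tau, ⟨ρ, hρdet, hconj⟩, ?_, ⟨1, ρ, ?_, hρdet, ?_⟩⟩
  · intro a
    rw [hσ, cp_sigma]
    simp only [IsRoot, eval_add, eval_pow, eval_X, eval_one]
    revert a; decide
  · rw [Matrix.det_one]; exact isUnit_one
  · have h1 : (1 : Matrix (Fin 4) (Fin 4) (ZMod 2))⁻¹ = 1 := Matrix.inv_eq_right_inv (one_mul 1)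
    rw [h1, one_mul, mul_one, hρinv, hσinv]
    decide
end

section
/- Let K be a field and let σ ∈ GL_3(K) be noncentral. Then the following are equivalent: (i) the characteristic polynomial of σ has a root in K; (ii) there exist ρ, τ ∈ GL_3(K) such that t_{12}(1) = (ρ⁻¹σρ)·(τ⁻¹σ⁻¹τ); (iii) there exist ρ, τ ∈ GL_3(K) such that t_{12}(1) = (ρ⁻¹σ⁻¹ρ)·(τ⁻¹στ). -/
open Matrix

section StmtAux
open Polynomial
variable {K : Type*} [Field K]


lemma mul_vecMulVec3 (A : Matrix (Fin 3) (Fin 3) K) (v w : Fin 3 → K) :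
    A * vecMulVec v w = vecMulVec (A *ᵥ v) w := by
  ext i j
  simp [Matrix.mul_apply, vecMulVec_apply, Matrix.mulVec, dotProduct,
    Finset.sum_mul, mul_assoc]

lemma vecMulVec_mul3 (v w : Fin 3 → K) (A : Matrix (Fin 3) (Fin 3) K) :
    vecMulVec v w * A = vecMulVec v (w ᵥ* A) := by
  ext i j
  simp [Matrix.mul_apply, vecMulVec_apply, Matrix.vecMul, dotProduct,
    Finset.mul_sum, mul_assoc]

lemma vecMulVec_mul_vecMulVec3 (v w v' w' : Fin 3 → K) :
    vecMulVec v w * vecMulVec v' w' = (w ⬝ᵥ v') • vecMulVec v w' := by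
  ext i j
  simp [Matrix.mul_apply, vecMulVec_apply, dotProduct, Fin.sum_univ_three]
  ring

lemma smul_vecMulVec3 (a : K) (v w : Fin 3 → K) :
    vecMulVec (a • v) w = a • vecMulVec v w := by
  ext i j
  simp [vecMulVec_apply, mul_assoc]

lemma vecMulVec_smul_right3 (a : K) (v w : Fin 3 → K) :
    vecMulVec v (a • w) = a • vecMulVec v w := by
  ext i j
  simp [vecMulVec_apply, mul_assoc, mul_comm, mul_left_comm]

lemma vecMulVec_sub3 (v w w' : Fin 3 → K) :
    vecMulVec v (w - w') = vecMulVec v w - vecMulVec v w' := by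
  ext i j
  simp [vecMulVec_apply, mul_sub]

lemma vecMul_vecMulVec3 (r y z : Fin 3 → K) :
    r ᵥ* vecMulVec y z = (r ⬝ᵥ y) • z := by
  funext j
  simp [Matrix.vecMul, vecMulVec_apply, dotProduct, Fin.sum_univ_three]
  ring

lemma stepA (σ₁ : Matrix (Fin 3) (Fin 3) K) (a : K)
    (hcol : ∀ i, σ₁ i 0 = if i = 0 then a else 0)
    (hnc : σ₁ ≠ a • (1 : Matrix (Fin 3) (Fin 3) K)) :
    ∃ (h h' : Matrix (Fin 3) (Fin 3) K) (w : Fin 3 → K),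
      h * h' = 1 ∧ h' * h = 1 ∧ w 0 = 0 ∧ w ≠ 0 ∧
      h' * σ₁ * h = σ₁ + vecMulVec ![1,0,0] w := by
  have hc0 : σ₁ 0 0 = a := by simpa using hcol 0
  have hc1 : σ₁ 1 0 = 0 := by simpa using hcol 1
  have hc2 : σ₁ 2 0 = 0 := by simpa using hcol 2
  by_cases Hx : ∃ x : Fin 3 → K, x 0 = 0 ∧ x ᵥ* (a • (1 : Matrix (Fin 3) (Fin 3) K) - σ₁) ≠ 0
  · obtain ⟨x, hx0, hxw⟩ := Hx
    set V : Matrix (Fin 3) (Fin 3) K := vecMulVec ![1,0,0] x with hV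
    set w : Fin 3 → K := x ᵥ* (a • (1 : Matrix (Fin 3) (Fin 3) K) - σ₁) with hw
    have hwx : w = a • x - x ᵥ* σ₁ := by
      funext j
      simp [hw, Matrix.vecMul, dotProduct, Fin.sum_univ_three, Matrix.one_apply,
        Matrix.sub_apply, Matrix.smul_apply]
      fin_cases j <;> simp <;> ring
    have hVV : V * V = 0 := by
      rw [hV, vecMulVec_mul_vecMulVec3]
      have : x ⬝ᵥ ![1,0,0] = 0 := by
        simp [dotProduct, Fin.sum_univ_three, hx0]
      rw [this, zero_smul]
    have hw0 : w 0 = 0 := by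
      simp [hw, Matrix.vecMul, dotProduct, Fin.sum_univ_three, hc0, hc1, hc2,
        Matrix.one_apply, hx0]
    refine ⟨1 + V, 1 - V, w, ?_, ?_, hw0, hxw, ?_⟩
    · have : (1 + V) * (1 - V) = 1 - V * V := by noncomm_ring
      rw [this, hVV, sub_zero]
    · have : (1 - V) * (1 + V) = 1 - V * V := by noncomm_ring
      rw [this, hVV, sub_zero]
    · have hσe : σ₁ *ᵥ ![1,0,0] = a • ![1,0,0] := by
        funext i
        fin_cases i <;>
          simp [Matrix.mulVec, dotProduct, Fin.sum_univ_three, hc0, hc1, hc2]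
      have h1 : σ₁ * V = vecMulVec ![1,0,0] (a • x) := by
        rw [hV, mul_vecMulVec3, hσe, smul_vecMulVec3, vecMulVec_smul_right3]
      have h2 : V * σ₁ = vecMulVec ![1,0,0] (x ᵥ* σ₁) := by rw [hV, vecMulVec_mul3]
      have h3 : V * σ₁ * V = 0 := by
        rw [h2, hV, vecMulVec_mul_vecMulVec3]
        have : (x ᵥ* σ₁) ⬝ᵥ ![1,0,0] = 0 := by
          simp [Matrix.vecMul, dotProduct, Fin.sum_univ_three, hc0, hc1, hc2, hx0]
        rw [this, zero_smul]
      have expand : (1 - V) * σ₁ * (1 + V) = σ₁ + σ₁ * V - V * σ₁ - V * σ₁ * V := by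
        noncomm_ring
      rw [expand, h3, h1, h2, sub_zero, hwx, vecMulVec_sub3, vecMulVec_smul_right3,
        ← smul_vecMulVec3]
      abel
  · push_neg at Hx
    have hr1 := Hx ![0,1,0] (by simp)
    have hr2 := Hx ![0,0,1] (by simp)
    have e11 : σ₁ 1 1 = a := by
      have h := congrFun hr1 1
      simp [Matrix.vecMul, dotProduct, Fin.sum_univ_three, Matrix.one_apply,
        sub_eq_zero] at h
      exact h.symm
    have e12 : σ₁ 1 2 = 0 := by
      have h := congrFun hr1 2
      simpa [Matrix.vecMul, dotProduct, Fin.sum_univ_three, Matrix.one_apply,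
        neg_eq_zero] using h
    have e21 : σ₁ 2 1 = 0 := by
      have h := congrFun hr2 1
      simpa [Matrix.vecMul, dotProduct, Fin.sum_univ_three, Matrix.one_apply,
        neg_eq_zero] using h
    have e22 : σ₁ 2 2 = a := by
      have h := congrFun hr2 2
      simp [Matrix.vecMul, dotProduct, Fin.sum_univ_three, Matrix.one_apply,
        sub_eq_zero] at h
      exact h.symm
    have hform : σ₁ = a • (1 : Matrix (Fin 3) (Fin 3) K)
        + vecMulVec ![1,0,0] ![0, σ₁ 0 1, σ₁ 0 2] := by
      ext i j
      fin_cases i <;> fin_cases j <;>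
        simp [hc0, hc1, hc2, e11, e12, e21, e22, vecMulVec_apply, Matrix.one_apply]
    have hbc : σ₁ 0 1 ≠ 0 ∨ σ₁ 0 2 ≠ 0 := by
      by_contra hcon
      push_neg at hcon
      apply hnc
      rw [hform, hcon.1, hcon.2]
      have : vecMulVec ![(1:K),0,0] ![0,0,0] = 0 := by
        ext i j; fin_cases j <;> simp [vecMulVec_apply]
      rw [this, add_zero]
    set r : Fin 3 → K := ![0, σ₁ 0 1, σ₁ 0 2] with hr
    set R : Matrix (Fin 3) (Fin 3) K := vecMulVec ![1,0,0] r with hR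
    -- choose y z w according to cases
    obtain ⟨y, z, w, hzy, hz0, hry, hw0, hwne⟩ :
        ∃ y z w : Fin 3 → K, z ⬝ᵥ y = 0 ∧ z 0 = 0 ∧ (r ⬝ᵥ y) • z = w ∧ w 0 = 0 ∧ w ≠ 0 := by
      rcases hbc with hb | hc
      · refine ⟨![0,1,0], ![0,0,(σ₁ 0 1)⁻¹], ![0,0,1], by simp [dotProduct,
          Fin.sum_univ_three], rfl, ?_, rfl, ?_⟩
        · funext j
          fin_cases j <;>
            simp [hr, dotProduct, Fin.sum_univ_three, mul_inv_cancel₀ hb]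
        · intro h0
          have := congrFun h0 2
          simp at this
      · refine ⟨![0,0,1], ![0,(σ₁ 0 2)⁻¹,0], ![0,1,0], by simp [dotProduct,
          Fin.sum_univ_three], rfl, ?_, rfl, ?_⟩
        · funext j
          fin_cases j <;>
            simp [hr, dotProduct, Fin.sum_univ_three, mul_inv_cancel₀ hc]
        · intro h0
          have := congrFun h0 1
          simp at this
    set V : Matrix (Fin 3) (Fin 3) K := vecMulVec y z with hVd
    have hVV : V * V = 0 := by rw [hVd, vecMulVec_mul_vecMulVec3, hzy, zero_smul]
    have hRV : R * V = vecMulVec ![1,0,0] w := by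
      rw [hR, hVd, vecMulVec_mul_vecMulVec3, ← hry, vecMulVec_smul_right3]
    have hVR : V * R = 0 := by
      rw [hVd, hR, vecMulVec_mul_vecMulVec3]
      have : z ⬝ᵥ ![1,0,0] = 0 := by simp [dotProduct, Fin.sum_univ_three, hz0]
      rw [this, zero_smul]
    refine ⟨1 + V, 1 - V, w, ?_, ?_, hw0, hwne, ?_⟩
    · have : (1 + V) * (1 - V) = 1 - V * V := by noncomm_ring
      rw [this, hVV, sub_zero]
    · have : (1 - V) * (1 + V) = 1 - V * V := by noncomm_ring
      rw [this, hVV, sub_zero]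
    · have expand : (1 - V) * σ₁ * (1 + V) = σ₁ + σ₁ * V - V * σ₁ - V * σ₁ * V := by
        noncomm_ring
      have hVσ : V * σ₁ = a • V := by
        rw [hform, mul_add, Matrix.mul_smul, mul_one, hVR, add_zero]
      have hσV : σ₁ * V = a • V + vecMulVec ![1,0,0] w := by
        rw [hform, add_mul, Matrix.smul_mul, one_mul, hRV]
      have hVσV : V * σ₁ * V = 0 := by rw [hVσ, Matrix.smul_mul, hVV, smul_zero]
      rw [expand, hVσV, hσV, hVσ, sub_zero]
      abel

lemma core (σ₁ : Matrix (Fin 3) (Fin 3) K) (hdet : IsUnit σ₁.det) (a : K) (ha : a ≠ 0)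
    (hcol : ∀ i, σ₁ i 0 = if i = 0 then a else 0)
    (hnc : σ₁ ≠ a • (1 : Matrix (Fin 3) (Fin 3) K)) :
    ∃ ρ τ : Matrix (Fin 3) (Fin 3) K, IsUnit ρ.det ∧ IsUnit τ.det ∧
      Matrix.transvection (0 : Fin 3) (1 : Fin 3) (1 : K)
        = (ρ⁻¹ * σ₁ * ρ) * (τ⁻¹ * σ₁⁻¹ * τ) := by
  obtain ⟨h, h', w, hhh', hh'h, hw0, hwne, hkey⟩ := stepA σ₁ a hcol hnc
  have hσσ : σ₁ * σ₁⁻¹ = 1 := Matrix.mul_nonsing_inv _ hdet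
  have hσσ' : σ₁⁻¹ * σ₁ = 1 := Matrix.nonsing_inv_mul _ hdet
  set m : Fin 3 → K := w ᵥ* σ₁⁻¹ with hm
  have hmσ : m ᵥ* σ₁ = w := by rw [hm, Matrix.vecMul_vecMul, hσσ', Matrix.vecMul_one]
  have hmne : m ≠ 0 := by
    intro h0
    apply hwne
    rw [← hmσ, h0, Matrix.zero_vecMul]
  have hinvcol : ∀ i, σ₁⁻¹ i 0 = if i = 0 then a⁻¹ else 0 := by
    have h1 : σ₁ *ᵥ ![a⁻¹, 0, 0] = ![1, 0, 0] := by
      funext i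
      have := hcol i
      fin_cases i <;>
        simp_all [Matrix.mulVec, dotProduct, Fin.sum_univ_three, mul_inv_cancel₀ ha]
    have h2 : σ₁⁻¹ *ᵥ ![1, 0, 0] = ![a⁻¹, 0, 0] := by
      rw [← h1, Matrix.mulVec_mulVec, hσσ', Matrix.one_mulVec]
    intro i
    have := congrFun h2 i
    simp [Matrix.mulVec, dotProduct, Fin.sum_univ_three] at this
    fin_cases i <;> simp_all
  have hm0 : m 0 = 0 := by
    have : m 0 = w 0 * a⁻¹ := by
      simp [hm, Matrix.vecMul, dotProduct, Fin.sum_univ_three,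
        hinvcol 0, hinvcol 1, hinvcol 2]
    rw [this, hw0, zero_mul]
  -- construct G
  obtain ⟨G, G', hGG', hG'G, hGrow, hGcol⟩ :
      ∃ G G' : Matrix (Fin 3) (Fin 3) K, G * G' = 1 ∧ G' * G = 1 ∧
        (∀ j, G 1 j = m j) ∧ (∀ i, G i 0 = if i = 0 then 1 else 0) := by
    have hm12 : m 1 ≠ 0 ∨ m 2 ≠ 0 := by
      by_contra hcon
      push_neg at hcon
      apply hmne
      funext i
      fin_cases i <;> simp [hm0, hcon.1, hcon.2]
    rcases hm12 with h1 | h2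
    · refine ⟨!![1,0,0; 0, m 1, m 2; 0,0,1], !![1,0,0; 0,(m 1)⁻¹, -((m 1)⁻¹ * m 2); 0,0,1],
        ?_, ?_, ?_, ?_⟩
      · rw [Matrix.mul_fin_three, Matrix.one_fin_three]
        funext i j
        fin_cases i <;> fin_cases j <;> simp [mul_inv_cancel₀ h1, inv_mul_cancel₀ h1] <;>
          field_simp <;> ring
      · rw [Matrix.mul_fin_three, Matrix.one_fin_three]
        funext i j
        fin_cases i <;> fin_cases j <;> simp [mul_inv_cancel₀ h1, inv_mul_cancel₀ h1] <;>
          field_simp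
      · intro j; fin_cases j <;> simp [hm0, Matrix.vecHead, Matrix.vecTail]
      · intro i; fin_cases i <;> simp [Matrix.vecHead, Matrix.vecTail]
    · refine ⟨!![1,0,0; 0, m 1, m 2; 0,1,0], !![1,0,0; 0,0,1; 0,(m 2)⁻¹, -((m 2)⁻¹ * m 1)],
        ?_, ?_, ?_, ?_⟩
      · rw [Matrix.mul_fin_three, Matrix.one_fin_three]
        funext i j
        fin_cases i <;> fin_cases j <;> simp [mul_inv_cancel₀ h2, inv_mul_cancel₀ h2] <;>
          field_simp <;> ring
      · rw [Matrix.mul_fin_three, Matrix.one_fin_three]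
        funext i j
        fin_cases i <;> fin_cases j <;> simp [mul_inv_cancel₀ h2, inv_mul_cancel₀ h2] <;>
          field_simp
      · intro j; fin_cases j <;> simp [hm0, Matrix.vecHead, Matrix.vecTail]
      · intro i; fin_cases i <;> simp [Matrix.vecHead, Matrix.vecTail]
  -- assemble
  have hhinv : h⁻¹ = h' := Matrix.inv_eq_right_inv hhh'
  have hG'inv : G'⁻¹ = G := Matrix.inv_eq_left_inv hGG'
  have hGu : G * (1 + vecMulVec ![1,0,0] m)
      = (1 + Matrix.single (0 : Fin 3) (1 : Fin 3) (1 : K)) * G := by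
    rw [mul_add, add_mul, mul_one, one_mul]
    congr 1
    ext i j
    have lhs : (G * vecMulVec ![1,0,0] m) i j = G i 0 * m j := by
      simp only [Matrix.mul_apply, Fin.sum_univ_three, vecMulVec_apply]
      simp [Matrix.mul_apply, Fin.sum_univ_three, vecMulVec_apply,
        Matrix.vecHead, Matrix.vecTail]
    have rhs : (Matrix.single (0 : Fin 3) (1 : Fin 3) (1 : K) * G) i j
        = (if i = 0 then 1 else 0) * m j := by
      simp only [Matrix.mul_apply, Fin.sum_univ_three, Matrix.single, Matrix.of_apply]
      by_cases hi : i = 0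
      · simp [hi, hGrow j]
      · simp [hi, hGrow j, Ne.symm hi]
    rw [lhs, rhs, hGcol i]
  have step1 : h' * σ₁ * h = (1 + vecMulVec ![1,0,0] m) * σ₁ := by
    rw [hkey, add_mul, one_mul, vecMulVec_mul3, hmσ]
  refine ⟨h * G', G', ?_, ?_, ?_⟩
  · apply Matrix.isUnit_det_of_right_inverse (B := G * h')
    calc h * G' * (G * h') = h * (G' * G) * h' := by simp only [Matrix.mul_assoc]
      _ = 1 := by rw [hG'G, mul_one, hhh']
  · exact Matrix.isUnit_det_of_right_inverse hG'G
  · have hρinv : (h * G')⁻¹ = G * h' := by rw [Matrix.mul_inv_rev, hhinv, hG'inv]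
    rw [hρinv, hG'inv]
    have main : (G * h') * σ₁ * (h * G') * ((G * σ₁⁻¹) * G')
        = Matrix.transvection (0 : Fin 3) (1 : Fin 3) (1 : K) := by
      have c1 : (G * h') * σ₁ * (h * G') * ((G * σ₁⁻¹) * G')
          = G * (h' * σ₁ * h) * G' * ((G * σ₁⁻¹) * G') := by
        simp only [Matrix.mul_assoc]
      rw [c1, step1]
      have c2 : G * ((1 + vecMulVec ![1,0,0] m) * σ₁) * G' * ((G * σ₁⁻¹) * G')
          = (G * (1 + vecMulVec ![1,0,0] m)) * ((σ₁ * ((G' * G) * σ₁⁻¹)) * G') := by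
        simp only [Matrix.mul_assoc]
      rw [c2, hG'G, one_mul, hσσ, one_mul, hGu, Matrix.mul_assoc, hGG', mul_one]
      rfl
    exact main.symm

lemma eval_charpoly3 (M : Matrix (Fin 3) (Fin 3) K) (t : K) :
    M.charpoly.eval t = (t • (1 : Matrix (Fin 3) (Fin 3) K) - M).det := by
  rw [Matrix.charpoly, ← Polynomial.coe_evalRingHom, RingHom.map_det]
  congr 1
  ext i j
  by_cases h : i = j
  · subst h; simp [charmatrix_apply_eq, Matrix.one_apply]
  · simp [charmatrix_apply_ne _ _ _ h, Matrix.one_apply, h]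

lemma isRoot_iff3 (M : Matrix (Fin 3) (Fin 3) K) (t : K) :
    M.charpoly.IsRoot t ↔ (t • (1 : Matrix (Fin 3) (Fin 3) K) - M).det = 0 := by
  rw [Polynomial.IsRoot, eval_charpoly3]

lemma fwd (σ : Matrix (Fin 3) (Fin 3) K) (hσ : IsUnit σ.det)
    (hnoncentral : ∀ a : K, σ ≠ a • (1 : Matrix (Fin 3) (Fin 3) K))
    (a : K) (hroot : σ.charpoly.IsRoot a) :
    ∃ ρ τ : Matrix (Fin 3) (Fin 3) K, IsUnit ρ.det ∧ IsUnit τ.det ∧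
      Matrix.transvection (0 : Fin 3) (1 : Fin 3) (1 : K)
        = (ρ⁻¹ * σ * ρ) * (τ⁻¹ * σ⁻¹ * τ) := by
  rw [isRoot_iff3] at hroot
  have ha : a ≠ 0 := by
    intro h0
    subst h0
    rw [zero_smul, zero_sub, Matrix.det_neg] at hroot
    simp at hroot
    exact hσ.ne_zero hroot
  have hdet0 : (σ - a • (1 : Matrix (Fin 3) (Fin 3) K)).det = 0 := by
    have : σ - a • (1 : Matrix (Fin 3) (Fin 3) K)
        = -(a • (1 : Matrix (Fin 3) (Fin 3) K) - σ) := (neg_sub _ _).symm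
    rw [this, Matrix.det_neg, hroot, mul_zero]
  obtain ⟨v, hv, hvm⟩ := (Matrix.exists_mulVec_eq_zero_iff).mpr hdet0
  have hσv : σ *ᵥ v = a • v := by
    rw [Matrix.sub_mulVec, Matrix.smul_mulVec, Matrix.one_mulVec, sub_eq_zero] at hvm
    exact hvm
  obtain ⟨k, hk⟩ := Function.ne_iff.mp hv
  have hk : v k ≠ 0 := hk
  -- build P with first column v
  obtain ⟨P, hPdet, hPcol⟩ : ∃ P : Matrix (Fin 3) (Fin 3) K, IsUnit P.det ∧
      P *ᵥ ![1,0,0] = v := by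
    fin_cases k
    · refine ⟨!![v 0, 0, 0; v 1, 1, 0; v 2, 0, 1], ?_, ?_⟩
      · have hd : Matrix.det !![v 0, 0, 0; v 1, 1, 0; v 2, 0, 1] = v 0 := by
          rw [Matrix.det_fin_three]
          simp [Matrix.vecHead, Matrix.vecTail]
        rw [hd]
        exact isUnit_iff_ne_zero.mpr hk
      · funext i
        fin_cases i <;> simp [Matrix.mulVec, dotProduct, Fin.sum_univ_three]
    · refine ⟨!![v 0, 0, 1; v 1, 0, 0; v 2, 1, 0], ?_, ?_⟩
      · have hd : Matrix.det !![v 0, 0, 1; v 1, 0, 0; v 2, 1, 0] = v 1 := by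
          rw [Matrix.det_fin_three]
          simp [Matrix.vecHead, Matrix.vecTail]
        rw [hd]
        exact isUnit_iff_ne_zero.mpr hk
      · funext i
        fin_cases i <;> simp [Matrix.mulVec, dotProduct, Fin.sum_univ_three]
    · refine ⟨!![v 0, 1, 0; v 1, 0, 1; v 2, 0, 0], ?_, ?_⟩
      · have hd : Matrix.det !![v 0, 1, 0; v 1, 0, 1; v 2, 0, 0] = v 2 := by
          rw [Matrix.det_fin_three]
          simp [Matrix.vecHead, Matrix.vecTail]
        rw [hd]
        exact isUnit_iff_ne_zero.mpr hk
      · funext i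
        fin_cases i <;> simp [Matrix.mulVec, dotProduct, Fin.sum_univ_three]
  have hPP : P * P⁻¹ = 1 := Matrix.mul_nonsing_inv _ hPdet
  have hPP' : P⁻¹ * P = 1 := Matrix.nonsing_inv_mul _ hPdet
  set σ₁ : Matrix (Fin 3) (Fin 3) K := P⁻¹ * σ * P with hσ₁
  have hdet₁ : IsUnit σ₁.det := by
    rw [hσ₁, Matrix.det_mul, Matrix.det_mul]
    exact (Matrix.isUnit_nonsing_inv_det P hPdet).mul hσ |>.mul hPdet
  have hcole : σ₁ *ᵥ ![1,0,0] = a • ![1,0,0] := by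
    rw [hσ₁, ← Matrix.mulVec_mulVec, ← Matrix.mulVec_mulVec, hPcol, hσv,
      Matrix.mulVec_smul, ← hPcol, Matrix.mulVec_mulVec, hPP', Matrix.one_mulVec]
  have hcol : ∀ i, σ₁ i 0 = if i = 0 then a else 0 := by
    intro i
    have h1 : (σ₁ *ᵥ ![1,0,0]) i = σ₁ i 0 := by
      simp [Matrix.mulVec, dotProduct, Fin.sum_univ_three]
    have := congrFun hcole i
    rw [h1] at this
    rw [this]
    fin_cases i <;> simp
  have hnc₁ : σ₁ ≠ a • (1 : Matrix (Fin 3) (Fin 3) K) := by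
    intro hcontra
    apply hnoncentral a
    have : P * σ₁ * P⁻¹ = σ := by
      rw [hσ₁]
      calc P * (P⁻¹ * σ * P) * P⁻¹ = (P * P⁻¹) * σ * (P * P⁻¹) := by
            simp only [Matrix.mul_assoc]
        _ = σ := by rw [hPP, one_mul, mul_one]
    rw [← this, hcontra, Matrix.mul_smul, Matrix.smul_mul, mul_one, hPP]
  obtain ⟨ρ₁, τ₁, hρ₁, hτ₁, heq⟩ := core σ₁ hdet₁ a ha hcol hnc₁
  have hσ₁inv : σ₁⁻¹ = P⁻¹ * σ⁻¹ * P := by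
    rw [hσ₁, Matrix.mul_inv_rev, Matrix.mul_inv_rev, Matrix.nonsing_inv_nonsing_inv P hPdet,
      Matrix.mul_assoc]
  refine ⟨P * ρ₁, P * τ₁, ?_, ?_, ?_⟩
  · rw [Matrix.det_mul]; exact hPdet.mul hρ₁
  · rw [Matrix.det_mul]; exact hPdet.mul hτ₁
  · rw [heq]
    have h1 : (P * ρ₁)⁻¹ * σ * (P * ρ₁) = ρ₁⁻¹ * σ₁ * ρ₁ := by
      rw [Matrix.mul_inv_rev, hσ₁]
      simp only [Matrix.mul_assoc]
    have h2 : (P * τ₁)⁻¹ * σ⁻¹ * (P * τ₁) = τ₁⁻¹ * σ₁⁻¹ * τ₁ := by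
      rw [Matrix.mul_inv_rev, hσ₁inv]
      simp only [Matrix.mul_assoc]
    rw [h1, h2]

lemma trace_conj3 (g M : Matrix (Fin 3) (Fin 3) K) (hg : IsUnit g.det) :
    (g⁻¹ * M * g).trace = M.trace := by
  rw [Matrix.trace_mul_comm, ← Matrix.mul_assoc, Matrix.mul_nonsing_inv _ hg, one_mul]

lemma adj_trace_conj3 (g M : Matrix (Fin 3) (Fin 3) K) (hg : IsUnit g.det) :
    (Matrix.adjugate (g⁻¹ * M * g)).trace = (Matrix.adjugate M).trace := by
  rw [Matrix.adjugate_mul_distrib, Matrix.adjugate_mul_distrib, Matrix.trace_mul_comm,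
    Matrix.mul_assoc, ← Matrix.adjugate_mul_distrib, Matrix.mul_nonsing_inv _ hg,
    Matrix.adjugate_one, mul_one]

lemma trace_mul_E3 (M : Matrix (Fin 3) (Fin 3) K) :
    (Matrix.single (0 : Fin 3) (1 : Fin 3) (1 : K) * M).trace = M 1 0 := by
  simp [Matrix.trace, Matrix.diag, Matrix.mul_apply, Fin.sum_univ_three, Matrix.single]

lemma trace_E_mul3 (M : Matrix (Fin 3) (Fin 3) K) :
    (M * Matrix.single (0 : Fin 3) (1 : Fin 3) (1 : K)).trace = M 1 0 := by
  simp [Matrix.trace, Matrix.diag, Matrix.mul_apply, Fin.sum_univ_three, Matrix.single]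

lemma adjt3 : Matrix.adjugate (Matrix.transvection (0 : Fin 3) (1 : Fin 3) (1 : K))
    = 1 - Matrix.single (0 : Fin 3) (1 : Fin 3) (1 : K) := by
  have ht : Matrix.transvection (0 : Fin 3) (1 : Fin 3) (1 : K) = !![1,1,0;0,1,0;0,0,1] := by
    ext i j
    fin_cases i <;> fin_cases j <;>
      simp [Matrix.transvection, Matrix.single, Matrix.one_apply,
        Matrix.vecHead, Matrix.vecTail]
  rw [ht, Matrix.adjugate_fin_three_of]
  ext i j
  fin_cases i <;> fin_cases j <;>
    simp [Matrix.single, Matrix.one_apply, Matrix.vecHead, Matrix.vecTail]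

lemma inv_dir (σ ρ τ : Matrix (Fin 3) (Fin 3) K) (hσ : IsUnit σ.det)
    (hρ : IsUnit ρ.det) (hτ : IsUnit τ.det)
    (heq : Matrix.transvection (0 : Fin 3) (1 : Fin 3) (1 : K)
      = (ρ⁻¹ * σ * ρ) * (τ⁻¹ * σ⁻¹ * τ)) :
    ∃ a : K, σ.charpoly.IsRoot a := by
  set A : Matrix (Fin 3) (Fin 3) K := ρ⁻¹ * σ * ρ with hA
  set B : Matrix (Fin 3) (Fin 3) K := τ⁻¹ * σ⁻¹ * τ with hB
  set C : Matrix (Fin 3) (Fin 3) K := τ⁻¹ * σ * τ with hC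
  set E : Matrix (Fin 3) (Fin 3) K := Matrix.single (0 : Fin 3) (1 : Fin 3) (1 : K)
    with hE
  have hBC : B * C = 1 := by
    calc B * C = τ⁻¹ * (σ⁻¹ * ((τ * τ⁻¹) * (σ * τ))) := by
          rw [hB, hC]; simp only [Matrix.mul_assoc]
      _ = τ⁻¹ * (σ⁻¹ * (σ * τ)) := by rw [Matrix.mul_nonsing_inv _ hτ, one_mul]
      _ = τ⁻¹ * τ := by rw [← Matrix.mul_assoc σ⁻¹ σ τ, Matrix.nonsing_inv_mul _ hσ, one_mul]
      _ = 1 := Matrix.nonsing_inv_mul _ hτ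
  have htC : Matrix.transvection (0 : Fin 3) (1 : Fin 3) (1 : K) * C = A := by
    calc Matrix.transvection (0 : Fin 3) (1 : Fin 3) (1 : K) * C = A * B * C := by rw [heq]
      _ = A * (B * C) := Matrix.mul_assoc _ _ _
      _ = A := by rw [hBC, mul_one]
  have htrace : A.trace = C.trace + C 1 0 := by
    rw [← htC, Matrix.transvection, add_mul, one_mul, Matrix.trace_add, ← hE, trace_mul_E3]
  have htrA : A.trace = σ.trace := trace_conj3 ρ σ hρ
  have htrC : C.trace = σ.trace := trace_conj3 τ σ hτ
  have hC10 : C 1 0 = 0 := by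
    have : C.trace = C.trace + C 1 0 := by rw [← htrace, htrA, htrC]
    exact (left_eq_add.mp this)
  have hadjA : (Matrix.adjugate A).trace = (Matrix.adjugate C).trace - Matrix.adjugate C 1 0 := by
    rw [← htC, Matrix.adjugate_mul_distrib, adjt3, ← hE, mul_sub, mul_one, Matrix.trace_sub,
      trace_E_mul3]
  have hadjAσ : (Matrix.adjugate A).trace = (Matrix.adjugate σ).trace := adj_trace_conj3 ρ σ hρ
  have hadjCσ : (Matrix.adjugate C).trace = (Matrix.adjugate σ).trace := adj_trace_conj3 τ σ hτ
  have hadjC10 : Matrix.adjugate C 1 0 = 0 := by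
    have : (Matrix.adjugate C).trace = (Matrix.adjugate C).trace - Matrix.adjugate C 1 0 := by
      rw [← hadjA, hadjAσ, hadjCσ]
    exact sub_eq_self.mp this.symm
  have hprod : C 1 2 * C 2 0 = 0 := by
    have : Matrix.adjugate C 1 0 = -(C 1 0 * C 2 2) + C 1 2 * C 2 0 := by
      rw [Matrix.adjugate_fin_three]
      simp
    rw [this, hC10] at hadjC10
    simpa using hadjC10
  have hτCτ : τ * C * τ⁻¹ = σ := by
    calc τ * C * τ⁻¹ = (τ * τ⁻¹) * σ * (τ * τ⁻¹) := by rw [hC]; simp only [Matrix.mul_assoc]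
      _ = σ := by rw [Matrix.mul_nonsing_inv _ hτ, one_mul, mul_one]
  have key : ∀ c : K, (c • (1 : Matrix (Fin 3) (Fin 3) K) - C).det = 0 →
      σ.charpoly.IsRoot c := by
    intro c hc
    rw [isRoot_iff3]
    have hστ : c • (1 : Matrix (Fin 3) (Fin 3) K) - σ
        = τ * (c • (1 : Matrix (Fin 3) (Fin 3) K) - C) * τ⁻¹ := by
      rw [mul_sub, sub_mul]
      congr 1
      · rw [Matrix.mul_smul, mul_one, Matrix.smul_mul, Matrix.mul_nonsing_inv _ hτ]
      · exact hτCτ.symm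
    rw [hστ, Matrix.det_mul, Matrix.det_mul, hc, mul_zero, zero_mul]
  rcases mul_eq_zero.mp hprod with h12 | h20
  · refine ⟨C 1 1, key _ ?_⟩
    rw [Matrix.det_fin_three]
    simp [Matrix.sub_apply, Matrix.smul_apply, Matrix.one_apply, hC10, h12]
  · refine ⟨C 0 0, key _ ?_⟩
    rw [Matrix.det_fin_three]
    simp [Matrix.sub_apply, Matrix.smul_apply, Matrix.one_apply, hC10, h20]

lemma swap3 (σ : Matrix (Fin 3) (Fin 3) K) (hσ : IsUnit σ.det)
    (H : ∃ ρ τ : Matrix (Fin 3) (Fin 3) K, IsUnit ρ.det ∧ IsUnit τ.det ∧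
      Matrix.transvection (0 : Fin 3) (1 : Fin 3) (1 : K)
        = (ρ⁻¹ * σ * ρ) * (τ⁻¹ * σ⁻¹ * τ)) :
    ∃ ρ τ : Matrix (Fin 3) (Fin 3) K, IsUnit ρ.det ∧ IsUnit τ.det ∧
      Matrix.transvection (0 : Fin 3) (1 : Fin 3) (1 : K)
        = (ρ⁻¹ * σ⁻¹ * ρ) * (τ⁻¹ * σ * τ) := by
  obtain ⟨ρ, τ, hρ, hτ, heq⟩ := H
  set A : Matrix (Fin 3) (Fin 3) K := ρ⁻¹ * σ * ρ with hA
  have hAdet : IsUnit A.det := by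
    rw [hA, Matrix.det_mul, Matrix.det_mul]
    exact ((Matrix.isUnit_nonsing_inv_det ρ hρ).mul hσ).mul hρ
  refine ⟨τ * A⁻¹, ρ, ?_, hρ, ?_⟩
  · rw [Matrix.det_mul]
    exact hτ.mul (Matrix.isUnit_nonsing_inv_det A hAdet)
  · have hinv : (τ * A⁻¹)⁻¹ = A * τ⁻¹ := by
      rw [Matrix.mul_inv_rev, Matrix.nonsing_inv_nonsing_inv _ hAdet]
    rw [hinv, ← hA]
    calc Matrix.transvection (0 : Fin 3) (1 : Fin 3) (1 : K)
        = A * (τ⁻¹ * σ⁻¹ * τ) := by rw [heq]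
      _ = A * (τ⁻¹ * (σ⁻¹ * (τ * (A⁻¹ * A)))) := by
          rw [Matrix.nonsing_inv_mul _ hAdet, mul_one]
          simp only [Matrix.mul_assoc]
      _ = A * τ⁻¹ * σ⁻¹ * (τ * A⁻¹) * A := by simp only [Matrix.mul_assoc]


end StmtAux

theorem stmt10 {K : Type*} [Field K]
    (σ : Matrix (Fin 3) (Fin 3) K) (hσ : IsUnit σ.det)
    (hnoncentral : ∀ a : K, σ ≠ a • (1 : Matrix (Fin 3) (Fin 3) K)) :
    ((∃ a : K, σ.charpoly.IsRoot a) ↔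
      (∃ ρ τ : Matrix (Fin 3) (Fin 3) K, IsUnit ρ.det ∧ IsUnit τ.det ∧
        Matrix.transvection (0 : Fin 3) (1 : Fin 3) (1 : K)
          = (ρ⁻¹ * σ * ρ) * (τ⁻¹ * σ⁻¹ * τ))) ∧
    ((∃ a : K, σ.charpoly.IsRoot a) ↔
      (∃ ρ τ : Matrix (Fin 3) (Fin 3) K, IsUnit ρ.det ∧ IsUnit τ.det ∧
        Matrix.transvection (0 : Fin 3) (1 : Fin 3) (1 : K)
          = (ρ⁻¹ * σ⁻¹ * ρ) * (τ⁻¹ * σ * τ))) := by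
  have hσinv : IsUnit σ⁻¹.det := Matrix.isUnit_nonsing_inv_det σ hσ
  have hσii : σ⁻¹⁻¹ = σ := Matrix.nonsing_inv_nonsing_inv σ hσ
  constructor
  · constructor
    · rintro ⟨a, ha⟩
      exact fwd σ hσ hnoncentral a ha
    · rintro ⟨ρ, τ, hρ, hτ, heq⟩
      exact inv_dir σ ρ τ hσ hρ hτ heq
  · constructor
    · rintro ⟨a, ha⟩
      exact swap3 σ hσ (fwd σ hσ hnoncentral a ha)
    · rintro ⟨ρ, τ, hρ, hτ, heq⟩
      -- (iii) for σ is (ii) for σ⁻¹; swap it to get (ii) for σ, then conclude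
      have H' : ∃ ρ' τ' : Matrix (Fin 3) (Fin 3) K, IsUnit ρ'.det ∧ IsUnit τ'.det ∧
          Matrix.transvection (0 : Fin 3) (1 : Fin 3) (1 : K)
            = (ρ'⁻¹ * σ⁻¹ * ρ') * (τ'⁻¹ * σ⁻¹⁻¹ * τ') := by
        refine ⟨ρ, τ, hρ, hτ, ?_⟩
        rw [hσii]
        exact heq
      have H2 := swap3 σ⁻¹ hσinv H'
      rw [hσii] at H2
      obtain ⟨ρ', τ', hρ', hτ', heq'⟩ := H2
      exact inv_dir σ ρ' τ' hσ hρ' hτ' heq'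
end

section
/- Let K be a field, let a, d, f, x ∈ K be nonzero and b, c ∈ K. Then the 3×3 matrix M₁ with rows (0,0,a), (d,0,b), (0,f,c) is conjugate by an element of SL_3(K) to the matrix M₂ with rows (0,0,d), (f,0,a⁻¹bf), (0,a,c), and M₁ is also conjugate by an element of SL_3(K) to the matrix M₃ with rows (0,0,ax²), (dx⁻¹,0,bx), (0,fx⁻¹,c). -/
open Matrix

theorem stmt12 {K : Type*} [Field K]
    (a d f x : K) (ha : a ≠ 0) (hd : d ≠ 0) (hf : f ≠ 0) (hx : x ≠ 0) (b c : K) :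
    (∃ ε : Matrix (Fin 3) (Fin 3) K, ε.det = 1 ∧
      ε⁻¹ * !![0, 0, a; d, 0, b; 0, f, c] * ε = !![0, 0, d; f, 0, a⁻¹ * b * f; 0, a, c]) ∧
    (∃ ε : Matrix (Fin 3) (Fin 3) K, ε.det = 1 ∧
      ε⁻¹ * !![0, 0, a; d, 0, b; 0, f, c] * ε
        = !![0, 0, a * x ^ 2; d * x⁻¹, 0, b * x; 0, f * x⁻¹, c]) := by
  constructor
  · refine ⟨!![0, 0, 1; 1, 0, a⁻¹ * b; 0, 1, a⁻¹ * c], ?_, ?_⟩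
    · simp [Matrix.det_fin_three]
    · have hdet : IsUnit (!![(0:K), 0, 1; 1, 0, a⁻¹ * b; 0, 1, a⁻¹ * c]).det := by
        simp [Matrix.det_fin_three]
      have key : !![(0:K), 0, a; d, 0, b; 0, f, c] * !![0, 0, 1; 1, 0, a⁻¹ * b; 0, 1, a⁻¹ * c]
          = !![(0:K), 0, 1; 1, 0, a⁻¹ * b; 0, 1, a⁻¹ * c] * !![0, 0, d; f, 0, a⁻¹ * b * f; 0, a, c] := by
        ext i j
        fin_cases i <;> fin_cases j <;>
          (simp [Matrix.mul_apply, Fin.sum_univ_three, Matrix.vecHead, Matrix.vecTail]; try ring; try field_simp; try ring)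
      rw [mul_assoc, key, ← mul_assoc, Matrix.nonsing_inv_mul _ hdet, one_mul]
  · refine ⟨!![x⁻¹, 0, 0; 0, 1, 0; 0, 0, x], ?_, ?_⟩
    · simp [Matrix.det_fin_three, hx]
    · have hdet : IsUnit (!![x⁻¹, (0:K), 0; 0, 1, 0; 0, 0, x]).det := by
        simp [Matrix.det_fin_three, hx]
      have key : !![(0:K), 0, a; d, 0, b; 0, f, c] * !![x⁻¹, 0, 0; 0, 1, 0; 0, 0, x]
          = !![x⁻¹, (0:K), 0; 0, 1, 0; 0, 0, x] * !![0, 0, a * x ^ 2; d * x⁻¹, 0, b * x; 0, f * x⁻¹, c] := by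
        ext i j
        fin_cases i <;> fin_cases j <;>
          (simp [Matrix.mul_apply, Fin.sum_univ_three, Matrix.vecHead, Matrix.vecTail]; try ring; try field_simp; try ring)
      rw [mul_assoc, key, ← mul_assoc, Matrix.nonsing_inv_mul _ hdet, one_mul]
end

section
/- Let K be a field, n ≥ 2, and let σ ∈ GL_n(K) be noncentral. Let σ' ∈ GL_{n+1}(K) be the block-diagonal matrix 1 ⊕ σ (a 1 in the top-left corner, σ in the bottom-right block, zeros elsewhere). Then there exist ρ, τ ∈ SL_{n+1}(K) such that t_{12}(1) = (ρ⁻¹σ'ρ)·(τ⁻¹(σ')⁻¹τ). (This is the finite-rank form of the stable result: in GL_∞(K), for every noncentral class C one has T ⊆ CC⁻¹, so m(C) = 2 whenever C ≠ T.) -/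
open Matrix

/-- The block-diagonal matrix `1 ⊕ σ` of size `(n+1) × (n+1)`: a `1` in the top-left corner,
`σ` in the bottom-right `n × n` block, and zeros elsewhere. -/
def oneOplus {n : ℕ} {K : Type*} [Field K] (σ : Matrix (Fin n) (Fin n) K) :
    Matrix (Fin (n + 1)) (Fin (n + 1)) K :=
  Matrix.of fun i j =>
    if hi : i = 0 then (if j = 0 then 1 else 0)
    else if hj : j = 0 then 0 else σ (i.pred hi) (j.pred hj)


section helpers
set_option linter.unusedSectionVars false
variable {m : Type*} [Fintype m] [DecidableEq m] {R : Type*} [CommRing R]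

lemma my_mul_vecMulVec (A : Matrix m m R) (u v : m → R) :
    A * vecMulVec u v = vecMulVec (A *ᵥ u) v := by
  ext i j
  simp [mul_apply, vecMulVec_apply, mulVec, dotProduct, Finset.sum_mul, mul_assoc]

lemma my_vecMulVec_mul (A : Matrix m m R) (u v : m → R) :
    vecMulVec u v * A = vecMulVec u (v ᵥ* A) := by
  ext i j
  simp only [mul_apply, vecMulVec_apply, vecMul, dotProduct, Finset.mul_sum]
  exact Finset.sum_congr rfl fun _ _ => by ring

lemma my_vecMulVec_mul_vecMulVec (u v u' v' : m → R) :
    vecMulVec u v * vecMulVec u' v' = (v ⬝ᵥ u') • vecMulVec u v' := by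
  ext i j
  simp only [mul_apply, vecMulVec_apply, Matrix.smul_apply, smul_eq_mul, dotProduct, Finset.sum_mul]
  exact Finset.sum_congr rfl fun _ _ => by ring

lemma my_vecMulVec_mulVec (u v x : m → R) :
    vecMulVec u v *ᵥ x = (v ⬝ᵥ x) • u := by
  ext i
  simp only [mulVec, dotProduct, vecMulVec_apply, Pi.smul_apply, smul_eq_mul, Finset.sum_mul]
  exact Finset.sum_congr rfl fun _ _ => by ring

lemma my_vecMul_vecMulVec (x u v : m → R) :
    x ᵥ* vecMulVec u v = (x ⬝ᵥ u) • v := by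
  ext j
  simp only [vecMul, dotProduct, vecMulVec_apply, Pi.smul_apply, smul_eq_mul, Finset.sum_mul]
  exact Finset.sum_congr rfl fun _ _ => by ring

lemma my_vecMulVec_sub (u a b : m → R) :
    vecMulVec u (a - b) = vecMulVec u a - vecMulVec u b := by
  ext i j
  simp [vecMulVec_apply, mul_sub]

lemma my_vecMulVec_zero (v : m → R) : vecMulVec (0 : m → R) v = 0 := by
  ext i j; simp [vecMulVec_apply]

lemma my_vecMulVec_zero' (u : m → R) : vecMulVec u (0 : m → R) = 0 := by
  ext i j; simp [vecMulVec_apply]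

lemma my_det_one_add_vecMulVec (u v : m → R) :
    (1 + vecMulVec u v).det = 1 + v ⬝ᵥ u := by
  rw [vecMulVec_eq Unit, det_one_add_replicateCol_mul_replicateRow]

lemma my_one_add_vecMulVec_mul_one_sub (u v : m → R) (h : v ⬝ᵥ u = 0) :
    (1 + vecMulVec u v) * (1 - vecMulVec u v) = 1 := by
  have hM : vecMulVec u v * vecMulVec u v = 0 := by
    rw [my_vecMulVec_mul_vecMulVec, h, zero_smul]
  rw [mul_sub, mul_one, add_mul, one_mul, hM, add_zero, add_sub_cancel_right]

lemma my_one_sub_vecMulVec_mul_one_add (u v : m → R) (h : v ⬝ᵥ u = 0) :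
    (1 - vecMulVec u v) * (1 + vecMulVec u v) = 1 := by
  have hM : vecMulVec u v * vecMulVec u v = 0 := by
    rw [my_vecMulVec_mul_vecMulVec, h, zero_smul]
  rw [mul_add, mul_one, sub_mul, one_mul, hM, sub_zero, sub_add_cancel]

lemma my_mulVec_one_add (u v x : m → R) :
    (1 + vecMulVec u v) *ᵥ x = x + (v ⬝ᵥ x) • u := by
  rw [add_mulVec, one_mulVec, my_vecMulVec_mulVec]

lemma my_vecMul_one_add (u v x : m → R) :
    x ᵥ* (1 + vecMulVec u v) = x + (x ⬝ᵥ u) • v := by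
  rw [vecMul_add, vecMul_one, my_vecMul_vecMulVec]

/-- The key algebraic computation. -/
lemma my_key (s s' G Ginv c cinv : Matrix m m R) (e₀ e₁ x' y' : m → R)
    (hss' : s * s' = 1)
    (hG : G = 1 + vecMulVec e₀ x') (hGinv : Ginv = 1 - vecMulVec e₀ x')
    (hx'e₀ : x' ⬝ᵥ e₀ = 0)
    (hse₀ : s *ᵥ e₀ = e₀)
    (hy' : y' = x' - x' ᵥ* s')
    (hc : c * cinv = 1) (hc' : cinv * c = 1)
    (hcol : c *ᵥ e₀ = e₀) (hrow : e₁ ᵥ* c = y') :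
    (c * G) * s * (Ginv * cinv) * (c * s' * cinv) = 1 + vecMulVec e₀ e₁ := by
  have hzero : x' ᵥ* s ⬝ᵥ e₀ = 0 := by
    rw [← dotProduct_mulVec, hse₀]; exact hx'e₀
  have hmid : G * s * Ginv * s' = 1 + vecMulVec e₀ y' := by
    rw [hG, hGinv, hy', my_vecMulVec_sub]
    simp only [hzero, add_mul, sub_mul, mul_sub, mul_add, one_mul, mul_one, Matrix.mul_assoc,
      my_vecMulVec_mul, my_mul_vecMulVec, my_vecMul_vecMulVec, my_vecMulVec_mulVec,
      hss', hse₀, hx'e₀, vecMul_vecMul, vecMul_one, zero_smul, my_vecMulVec_zero,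
      my_vecMulVec_zero', smul_zero, mul_zero, zero_mul, sub_zero, add_zero]
    abel
  have hassoc : (c * G) * s * (Ginv * cinv) * (c * s' * cinv)
      = c * (G * s * Ginv * s') * cinv := by
    have h1 : (c * G) * s * (Ginv * cinv) * (c * s' * cinv)
        = c * (G * s * Ginv) * ((cinv * c) * (s' * cinv)) := by
      simp only [Matrix.mul_assoc]
    rw [h1, hc', one_mul]
    simp only [Matrix.mul_assoc]
  rw [hassoc, hmid]
  have hy'cinv : y' ᵥ* cinv = e₁ := by
    rw [← hrow, vecMul_vecMul, hc, vecMul_one]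
  rw [mul_add, mul_one, add_mul, my_mul_vecMulVec, hcol, my_vecMulVec_mul, hc, hy'cinv]

end helpers


section oneOplusLemmas
variable {n : ℕ} {K : Type*} [Field K]

lemma my_oneOplus_mul (a b : Matrix (Fin n) (Fin n) K) :
    oneOplus a * oneOplus b = oneOplus (a * b) := by
  ext i j
  simp only [mul_apply, oneOplus, of_apply, Fin.sum_univ_succ]
  by_cases hi : i = 0 <;> by_cases hj : j = 0 <;>
    simp [hi, hj, Fin.succ_ne_zero, Fin.pred_succ, mul_apply]

lemma my_oneOplus_one : oneOplus (1 : Matrix (Fin n) (Fin n) K) = 1 := by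
  ext i j
  by_cases hi : i = 0 <;> by_cases hj : j = 0 <;>
    simp [oneOplus, hi, hj, one_apply, Fin.pred_inj, eq_comm]

lemma my_oneOplus_mulVec_single (a : Matrix (Fin n) (Fin n) K) :
    oneOplus a *ᵥ Pi.single (0 : Fin (n+1)) (1 : K) = Pi.single 0 1 := by
  rw [mulVec_single]
  funext i
  by_cases hi : i = 0 <;> simp [oneOplus, hi, Pi.single_apply]

end oneOplusLemmas

set_option maxHeartbeats 1000000 in
lemma my_exists_c {n : ℕ} (hn : 2 ≤ n) {K : Type*} [Field K] (y' : Fin (n+1) → K)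
    (h0 : y' ⟨0, Nat.succ_pos n⟩ = 0) (hne : y' ≠ 0) :
    ∃ c cinv : Matrix (Fin (n+1)) (Fin (n+1)) K,
      c * cinv = 1 ∧ cinv * c = 1 ∧ c.det = 1 ∧
      c *ᵥ Pi.single ⟨0, Nat.succ_pos n⟩ 1 = Pi.single ⟨0, Nat.succ_pos n⟩ 1 ∧
      (Pi.single (⟨1, Nat.succ_lt_succ (by omega)⟩ : Fin (n+1)) (1:K)) ᵥ* c = y' := by
  classical
  set i0 : Fin (n+1) := ⟨0, by omega⟩ with hi0def
  set i1 : Fin (n+1) := ⟨1, by omega⟩ with hi1def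
  set i2 : Fin (n+1) := ⟨2, by omega⟩ with hi2def
  have h01 : i0 ≠ i1 := by simp [hi0def, hi1def, Fin.ext_iff]
  have h02 : i0 ≠ i2 := by simp [hi0def, hi2def, Fin.ext_iff]
  have h12 : i1 ≠ i2 := by simp [hi1def, hi2def, Fin.ext_iff]
  by_cases hk : ∃ k, k ≠ i1 ∧ y' k ≠ 0
  · obtain ⟨k, hk1, hkne⟩ := hk
    set b : K := (y' i1 - 1) / y' k with hbdef
    set w : Fin (n+1) → K := y' - y' i1 • (Pi.single i1 1 : Fin (n+1) → K) with hwdef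
    set U : Matrix (Fin (n+1)) (Fin (n+1)) K := 1 + vecMulVec (Pi.single i1 1) w with hUdef
    set V : Matrix (Fin (n+1)) (Fin (n+1)) K :=
      1 + vecMulVec (Pi.single k 1) (b • (Pi.single i1 1 : Fin (n+1) → K)) with hVdef
    set Uinv : Matrix (Fin (n+1)) (Fin (n+1)) K := 1 - vecMulVec (Pi.single i1 1) w with hUinvdef
    set Vinv : Matrix (Fin (n+1)) (Fin (n+1)) K :=
      1 - vecMulVec (Pi.single k 1) (b • (Pi.single i1 1 : Fin (n+1) → K)) with hVinvdef
    have hw1 : w ⬝ᵥ Pi.single i1 1 = 0 := by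
      simp [hwdef, dotProduct_single, Pi.single_apply]
    have hbe : (b • (Pi.single i1 1 : Fin (n+1) → K)) ⬝ᵥ (Pi.single k 1 : Fin (n+1) → K) = 0 := by
      simp [dotProduct_single, Pi.single_apply, Ne.symm hk1, hk1]
    have hUU : U * Uinv = 1 := my_one_add_vecMulVec_mul_one_sub _ _ hw1
    have hUU' : Uinv * U = 1 := my_one_sub_vecMulVec_mul_one_add _ _ hw1
    have hVV : V * Vinv = 1 := my_one_add_vecMulVec_mul_one_sub _ _ hbe
    have hVV' : Vinv * V = 1 := my_one_sub_vecMulVec_mul_one_add _ _ hbe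
    refine ⟨U * V, Vinv * Uinv, ?_, ?_, ?_, ?_, ?_⟩
    · have h : U * V * (Vinv * Uinv) = U * (V * Vinv) * Uinv := by
        simp only [Matrix.mul_assoc]
      rw [h, hVV, mul_one, hUU]
    · have h : Vinv * Uinv * (U * V) = Vinv * (Uinv * U) * V := by
        simp only [Matrix.mul_assoc]
      rw [h, hUU', mul_one, hVV']
    · rw [det_mul, hUdef, hVdef, my_det_one_add_vecMulVec, my_det_one_add_vecMulVec,
        hw1, hbe]
      norm_num
    · have sc1 : V *ᵥ Pi.single i0 1 = Pi.single i0 1 := by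
        rw [hVdef, my_mulVec_one_add]
        have h1 : (b • (Pi.single i1 1 : Fin (n+1) → K)) ⬝ᵥ (Pi.single i0 1 : Fin (n+1) → K) = 0 := by
          simp [dotProduct_single, Pi.single_apply, h01]
        rw [h1, zero_smul, add_zero]
      have sc2 : U *ᵥ Pi.single i0 1 = Pi.single i0 1 := by
        rw [hUdef, my_mulVec_one_add]
        have h2 : w ⬝ᵥ (Pi.single i0 1 : Fin (n+1) → K) = 0 := by
          simp [hwdef, dotProduct_single, Pi.single_apply, h0, h01]
        rw [h2, zero_smul, add_zero]
      rw [← mulVec_mulVec, sc1, sc2]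
    · have st1 : (Pi.single i1 1 : Fin (n+1) → K) ᵥ* U = Pi.single i1 1 + w := by
        rw [hUdef, my_vecMul_one_add]
        have hd : (Pi.single i1 1 : Fin (n+1) → K) ⬝ᵥ Pi.single i1 1 = 1 := by
          simp [dotProduct_single, Pi.single_apply]
        rw [hd, one_smul]
      have st2 : ((Pi.single i1 1 : Fin (n+1) → K) + w) ᵥ* V = y' := by
        rw [hVdef, my_vecMul_one_add]
        have hd2 : ((Pi.single i1 1 : Fin (n+1) → K) + w) ⬝ᵥ Pi.single k 1 = y' k := by
          simp [hwdef, dotProduct_single, Pi.single_apply, hk1]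
        rw [hd2]
        have hb : y' k • (b • (Pi.single i1 1 : Fin (n+1) → K))
            = (y' i1 - 1) • (Pi.single i1 1 : Fin (n+1) → K) := by
          rw [smul_smul]
          congr 1
          rw [hbdef]
          field_simp
        rw [hb, hwdef]
        module
      rw [← vecMul_vecMul, st1, st2]
  · push_neg at hk
    have ha : y' i1 ≠ 0 := by
      intro h
      apply hne
      funext j
      by_cases hj : j = i1
      · rw [hj]; exact h
      · exact hk j hj
    set a := y' i1 with hadef
    refine ⟨diagonal (fun j => if j = i1 then a else 1)
        * diagonal (fun j => if j = i2 then a⁻¹ else 1),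
        diagonal (fun j => if j = i2 then a else 1)
        * diagonal (fun j => if j = i1 then a⁻¹ else 1), ?_, ?_, ?_, ?_, ?_⟩
    · rw [diagonal_mul_diagonal, diagonal_mul_diagonal, diagonal_mul_diagonal]
      rw [← diagonal_one]
      refine congrArg diagonal (funext fun j => ?_)
      by_cases hj1 : j = i1 <;> by_cases hj2 : j = i2 <;>
        simp [Pi.mul_apply, Pi.one_apply, hj1, hj2, h12, Ne.symm h12] <;> field_simp
    · rw [diagonal_mul_diagonal, diagonal_mul_diagonal, diagonal_mul_diagonal]
      rw [← diagonal_one]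
      refine congrArg diagonal (funext fun j => ?_)
      by_cases hj1 : j = i1 <;> by_cases hj2 : j = i2 <;>
        simp [Pi.mul_apply, Pi.one_apply, hj1, hj2, h12, Ne.symm h12] <;> field_simp
    · rw [det_mul, det_diagonal, det_diagonal, Finset.prod_ite_eq', Finset.prod_ite_eq']
      simp [mul_inv_cancel₀ ha]
    · rw [← mulVec_mulVec, diagonal_mulVec_single, diagonal_mulVec_single]
      simp [h01, h02]
    · rw [← vecMul_vecMul, single_vecMul_diagonal, single_vecMul_diagonal]
      funext j
      by_cases hj : j = i1
      · simp [hj, Pi.single_apply, h12, hadef]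
      · simp [Pi.single_apply, hj, hk j hj]


set_option maxHeartbeats 1000000 in
theorem stmt15 {n : ℕ} (hn : 2 ≤ n) {K : Type*} [Field K]
    (σ : Matrix (Fin n) (Fin n) K) (hσ : IsUnit σ.det)
    (hnoncentral : ∀ a : K, σ ≠ a • (1 : Matrix (Fin n) (Fin n) K)) :
    ∃ ρ τ : Matrix (Fin (n + 1)) (Fin (n + 1)) K, ρ.det = 1 ∧ τ.det = 1 ∧
      Matrix.transvection (⟨0, by omega⟩ : Fin (n + 1)) (⟨1, by omega⟩ : Fin (n + 1)) (1 : K)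
        = (ρ⁻¹ * oneOplus σ * ρ) * (τ⁻¹ * (oneOplus σ)⁻¹ * τ) := by
  classical
  have hσ1 : σ * σ⁻¹ = 1 := mul_nonsing_inv σ hσ
  have hσ1' : σ⁻¹ * σ = 1 := nonsing_inv_mul σ hσ
  have hss' : oneOplus σ * oneOplus σ⁻¹ = 1 := by
    rw [my_oneOplus_mul, hσ1, my_oneOplus_one]
  have hi0 : (⟨0, by omega⟩ : Fin (n+1)) = 0 := by ext; simp
  have hσinv_ne : σ⁻¹ ≠ 1 := by
    intro h
    have h2 := hσ1
    rw [h, mul_one] at h2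
    exact hnoncentral 1 (by rw [one_smul]; exact h2)
  obtain ⟨i, q, hiq⟩ : ∃ i q, σ⁻¹ i q ≠ (1 : Matrix (Fin n) (Fin n) K) i q := by
    by_contra h
    push_neg at h
    exact hσinv_ne (by ext a b; exact h a b)
  set x' : Fin (n+1) → K := Pi.single i.succ 1 with hx'def
  set y' : Fin (n+1) → K := x' - x' ᵥ* oneOplus σ⁻¹ with hy'def
  have hx'e₀ : x' ⬝ᵥ (Pi.single (⟨0, by omega⟩ : Fin (n+1)) (1:K)) = 0 := by
    rw [hi0, hx'def]
    simp [dotProduct_single, Pi.single_apply, (Fin.succ_ne_zero i).symm, Fin.succ_ne_zero]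
  have hse₀ : oneOplus σ *ᵥ (Pi.single (⟨0, by omega⟩ : Fin (n+1)) (1:K))
      = Pi.single (⟨0, by omega⟩ : Fin (n+1)) (1:K) := by
    rw [hi0]; exact my_oneOplus_mulVec_single σ
  have hy'0 : y' ⟨0, by omega⟩ = 0 := by
    rw [hy'def, hi0]
    simp [hx'def, oneOplus, Pi.single_apply, Fin.succ_ne_zero]
  have hval : y' q.succ = (if q = i then 1 else 0) - σ⁻¹ i q := by
    rw [hy'def]
    simp [hx'def, oneOplus, Pi.single_apply, Fin.succ_ne_zero, Fin.pred_succ, Fin.succ_inj]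
  have hy'ne : y' ≠ 0 := by
    intro h
    have h2 := congrFun h q.succ
    rw [hval] at h2
    apply hiq
    rw [one_apply]
    have h3 : σ⁻¹ i q = if q = i then 1 else 0 := (sub_eq_zero.mp h2).symm
    rw [h3]
    by_cases hqi : q = i
    · simp [hqi]
    · simp [hqi, Ne.symm hqi]
  obtain ⟨c, cinv, hc, hc', hcdet, hcol, hrow⟩ := my_exists_c hn y' hy'0 hy'ne
  set G : Matrix (Fin (n+1)) (Fin (n+1)) K :=
    1 + vecMulVec (Pi.single ⟨0, by omega⟩ 1) x' with hGdef
  set Ginv : Matrix (Fin (n+1)) (Fin (n+1)) K :=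
    1 - vecMulVec (Pi.single ⟨0, by omega⟩ 1) x' with hGinvdef
  have hGG : G * Ginv = 1 := my_one_add_vecMulVec_mul_one_sub _ _ hx'e₀
  have hGdet : G.det = 1 := by rw [hGdef, my_det_one_add_vecMulVec, hx'e₀, add_zero]
  have hcGdet : (c * G).det = 1 := by rw [det_mul, hcdet, hGdet, one_mul]
  refine ⟨(c * G)⁻¹, c⁻¹, ?_, ?_, ?_⟩
  · rw [det_nonsing_inv, hcGdet, Ring.inverse_one]
  · rw [det_nonsing_inv, hcdet, Ring.inverse_one]
  · have hinv1 : (c * G)⁻¹ = Ginv * cinv := inv_eq_right_inv (by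
      have h : (c * G) * (Ginv * cinv) = c * (G * Ginv) * cinv := by
        simp only [Matrix.mul_assoc]
      rw [h, hGG, mul_one, hc])
    have hinv2 : c⁻¹ = cinv := inv_eq_right_inv hc
    have hinv3 : ((c * G)⁻¹)⁻¹ = c * G :=
      nonsing_inv_nonsing_inv _ (by rw [hcGdet]; exact isUnit_one)
    have hinv4 : (c⁻¹)⁻¹ = c :=
      nonsing_inv_nonsing_inv _ (by rw [hcdet]; exact isUnit_one)
    have hinv5 : (oneOplus σ)⁻¹ = oneOplus σ⁻¹ := inv_eq_right_inv hss'
    rw [hinv3, hinv5, hinv4, hinv1, hinv2]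
    have hk := my_key (oneOplus σ) (oneOplus σ⁻¹) G Ginv c cinv
      (Pi.single ⟨0, by omega⟩ 1) (Pi.single ⟨1, by omega⟩ 1) x' y'
      hss' hGdef hGinvdef hx'e₀ hse₀ hy'def hc hc' hcol hrow
    rw [hk]
    rw [show Matrix.transvection (⟨0, by omega⟩ : Fin (n+1)) (⟨1, by omega⟩ : Fin (n+1)) (1:K)
      = 1 + Matrix.single (⟨0, by omega⟩ : Fin (n+1)) (⟨1, by omega⟩ : Fin (n+1)) (1:K) from rfl]
    rw [single_eq_single_vecMulVec_single]
end
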